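/- arXiv:2605.01444 — 3 statements merged into one kernel-verified Lean document; each statement's English description precedes it below -/
import Mathlib

section
/- For λ > 1, let q(λ) be the extinction probability of a Galton–Watson process with Poisson(λ) offspring (so q = e^{−λ(1−q)} and 0 < q < 1), and let β(λ) = E[1/|PGW(λ)|·1_{|PGW(λ)|<∞}] = Σ_{m≥1} (1/m)·e^{−λm}(λm)^{m−1}/m!. Then β(λ) = q(λ) − λ·q(λ)²/2. -/
open Finset Filter Topology fwdDiff

lemma fwdDiff_iter_zero_fun (n : ℕ) : Δ_[(1:ℝ)] ^[n] (fun _ : ℝ => (0:ℝ)) = fun _ => 0 := by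
  induction n with
  | zero => rfl
  | succ n ih => rw [Function.iterate_succ_apply]; simpa [fwdDiff] using ih

lemma fwdDiff_pow_eq_zero : ∀ d : ℕ, ∀ n : ℕ, d < n →
    Δ_[(1:ℝ)] ^[n] (fun y : ℝ => y ^ d) = fun _ => 0 := by
  intro d
  induction d using Nat.strong_induction_on with
  | _ d ih =>
    intro n hn
    -- first show Δ^[d+1] (y^d) = 0
    have key : Δ_[(1:ℝ)] ^[d+1] (fun y : ℝ => y ^ d) = fun _ => 0 := by
      rw [Function.iterate_succ_apply]
      have hΔ : Δ_[(1:ℝ)] (fun y : ℝ => y ^ d)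
          = ∑ j ∈ range d, (d.choose j : ℝ) • (fun y : ℝ => y ^ j) := by
        funext y
        simp only [fwdDiff, Finset.sum_apply, Pi.smul_apply, smul_eq_mul]
        have := add_pow y (1:ℝ) d
        rw [Finset.sum_range_succ] at this
        simp only [one_pow, mul_one, Nat.choose_self, Nat.cast_one] at this
        rw [this]
        rw [add_sub_cancel_right]
        exact Finset.sum_congr rfl fun j _ => mul_comm _ _
      rw [hΔ, fwdDiff_iter_finset_sum]
      funext y
      simp only [Finset.sum_apply]
      rw [Finset.sum_eq_zero]
      intro j hj
      rw [fwdDiff_iter_const_smul, ih j (mem_range.mp hj) d (mem_range.mp hj)]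
      simp
    -- now iterate
    obtain ⟨m, rfl⟩ : ∃ m, n = m + (d + 1) := ⟨n - (d+1), by omega⟩
    rw [Function.iterate_add_apply, key, fwdDiff_iter_zero_fun]

lemma alt_sum_pow_eq_zero (n d : ℕ) (hd : d < n) (x : ℝ) :
    ∑ k ∈ range (n+1), (-1:ℝ) ^ (n - k) * (n.choose k : ℝ) * (x + k) ^ d = 0 := by
  have h := fwdDiff_iter_eq_sum_shift (1:ℝ) (fun y : ℝ => y ^ d) n x
  rw [fwdDiff_pow_eq_zero d n hd] at h
  have : (0:ℝ) = ∑ k ∈ range (n + 1), ((-1:ℤ) ^ (n - k) * (n.choose k : ℤ)) • (x + k • (1:ℝ)) ^ d := h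
  rw [eq_comm, Finset.sum_congr rfl] at this
  · exact this
  intro k _
  push_cast [zsmul_eq_mul]
  ring

lemma hasDerivAt_shift_pow (a : ℝ) (e : ℕ) (y : ℝ) :
    HasDerivAt (fun y : ℝ => (y + a) ^ e) (e * (y + a) ^ (e - 1)) y := by
  simpa [Function.comp_def] using (hasDerivAt_pow e (y + a)).comp y ((hasDerivAt_id y).add_const a)

lemma abel_forest : ∀ n : ℕ, 1 ≤ n → ∀ y : ℝ,
    ∑ k ∈ Icc 1 n, (n.choose k : ℝ) * (k:ℝ) ^ (k - 1) * (y + ((n - k : ℕ):ℝ)) ^ (n - k)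
      = n * (y + n) ^ (n - 1) := by
  intro n
  induction n with
  | zero => omega
  | succ n IH =>
    intro _ y
    rcases Nat.eq_or_lt_of_le (Nat.one_le_iff_ne_zero.mpr (Nat.succ_ne_zero n)) with h1 | h1
    · -- n + 1 = 1
      obtain rfl : n = 0 := by omega
      simp
    have hn : 1 ≤ n := by omega
    -- the difference function
    set G : ℝ → ℝ := fun y =>
      ∑ k ∈ Icc 1 (n+1), ((n+1).choose k : ℝ) * (k:ℝ) ^ (k - 1)
        * (y + (((n+1) - k : ℕ):ℝ)) ^ ((n+1) - k) with hG
    set H : ℝ → ℝ := fun y => ((n+1:ℕ):ℝ) * (y + ((n+1:ℕ):ℝ)) ^ n with hH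
    have hderivG : ∀ y : ℝ, HasDerivAt G
        (∑ k ∈ Icc 1 (n+1), ((n+1).choose k : ℝ) * (k:ℝ) ^ (k - 1)
          * ((((n+1) - k : ℕ):ℝ) * (y + (((n+1) - k : ℕ):ℝ)) ^ (((n+1) - k) - 1))) y := by
      intro y
      exact HasDerivAt.fun_sum fun k _ =>
        (hasDerivAt_shift_pow (((n+1) - k : ℕ):ℝ) ((n+1) - k) y).const_mul _
    have hderivsum : ∀ y : ℝ,
        (∑ k ∈ Icc 1 (n+1), ((n+1).choose k : ℝ) * (k:ℝ) ^ (k - 1)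
          * ((((n+1) - k : ℕ):ℝ) * (y + (((n+1) - k : ℕ):ℝ)) ^ (((n+1) - k) - 1)))
        = ((n+1:ℕ):ℝ) * (n * (y + ((n+1:ℕ):ℝ)) ^ (n - 1)) := by
      intro y
      rw [Finset.sum_Icc_succ_top (by omega)]
      have hlast : ((n+1).choose (n+1) : ℝ) * ((n+1:ℕ):ℝ) ^ ((n+1) - 1)
          * ((((n+1) - (n+1) : ℕ):ℝ) * (y + (((n+1) - (n+1) : ℕ):ℝ)) ^ (((n+1) - (n+1)) - 1)) = 0 := by
        simp
      rw [hlast, add_zero]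
      have hterm : ∀ k ∈ Icc 1 n, ((n+1).choose k : ℝ) * (k:ℝ) ^ (k - 1)
          * ((((n+1) - k : ℕ):ℝ) * (y + (((n+1) - k : ℕ):ℝ)) ^ (((n+1) - k) - 1))
          = ((n+1:ℕ):ℝ) * ((n.choose k : ℝ) * (k:ℝ) ^ (k - 1)
              * ((y+1) + ((n - k : ℕ):ℝ)) ^ (n - k)) := by
        intro k hk
        obtain ⟨hk1, hk2⟩ := mem_Icc.mp hk
        have e1 : (n+1) - k = (n - k) + 1 := by omega
        have e2 : ((n+1) - k) - 1 = n - k := by omega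
        have e3 : ((n+1).choose k : ℝ) * (((n+1) - k : ℕ):ℝ) = ((n+1:ℕ):ℝ) * (n.choose k : ℝ) := by
          have : (n+1).choose k * ((n+1) - k) = (n+1) * n.choose k := by
            have h4 : (n+1).choose k = (n+1).choose ((n+1) - k) := (Nat.choose_symm (by omega)).symm
            have h5 : (n+1) - k = (n - k) + 1 := by omega
            rw [h4, h5, ← Nat.choose_symm hk2]
            simpa [Nat.succ_eq_add_one] using (Nat.add_one_mul_choose_eq n (n-k)).symm
          exact_mod_cast congrArg (Nat.cast : ℕ → ℝ) this
        have e4 : y + (((n+1) - k : ℕ):ℝ) = (y+1) + ((n - k : ℕ):ℝ) := by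
          rw [e1]; push_cast; ring
        rw [e2, e4]
        rw [show ((n+1).choose k : ℝ) * (k:ℝ) ^ (k - 1)
          * ((((n+1) - k : ℕ):ℝ) * ((y+1) + ((n - k : ℕ):ℝ)) ^ (n - k))
          = (((n+1).choose k : ℝ) * (((n+1) - k : ℕ):ℝ)) * ((k:ℝ) ^ (k - 1)
            * ((y+1) + ((n - k : ℕ):ℝ)) ^ (n - k)) by ring, e3]
        ring
      rw [Finset.sum_congr rfl hterm, ← Finset.mul_sum, IH hn (y+1)]
      have : y + 1 + (n:ℝ) = y + ((n+1:ℕ):ℝ) := by push_cast; ring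
      rw [this]
    have hderivH : ∀ y : ℝ, HasDerivAt H (((n+1:ℕ):ℝ) * ((n:ℝ) * (y + ((n+1:ℕ):ℝ)) ^ (n - 1))) y := by
      intro y
      exact (hasDerivAt_shift_pow ((n+1:ℕ):ℝ) n y).const_mul ((n+1:ℕ):ℝ)
    have hF : ∀ y : ℝ, HasDerivAt (fun y => G y - H y) 0 y := by
      intro y
      have := ((hderivG y).sub (hderivH y))
      rwa [hderivsum y, sub_self] at this
    have hconst : ∀ y : ℝ, G y - H y = G (-(((n+1):ℕ):ℝ)) - H (-(((n+1):ℕ):ℝ)) := by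
      intro y
      exact is_const_of_deriv_eq_zero (fun x => (hF x).differentiableAt)
        (fun x => (hF x).deriv) _ _
    have hH0 : H (-(((n+1):ℕ):ℝ)) = 0 := by
      simp only [hH]
      rw [neg_add_cancel, zero_pow (by omega)]
      ring
    have hG0 : G (-(((n+1):ℕ):ℝ)) = 0 := by
      simp only [hG]
      have hterm : ∀ k ∈ Icc 1 (n+1),
          ((n+1).choose k : ℝ) * (k:ℝ) ^ (k - 1)
            * ((-(((n+1):ℕ):ℝ)) + (((n+1) - k : ℕ):ℝ)) ^ ((n+1) - k)
          = (-1:ℝ) ^ ((n+1) - k) * ((n+1).choose k : ℝ) * (k:ℝ) ^ n := by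
        intro k hk
        obtain ⟨hk1, hk2⟩ := mem_Icc.mp hk
        have e1 : (-(((n+1):ℕ):ℝ)) + (((n+1) - k : ℕ):ℝ) = -(k:ℝ) := by
          rw [Nat.cast_sub (by omega)]; push_cast; ring
        rw [e1, neg_pow]
        have e2 : (k:ℝ) ^ (k - 1) * (k:ℝ) ^ ((n+1) - k) = (k:ℝ) ^ n := by
          rw [← pow_add]; congr 1; omega
        rw [show ((n+1).choose k : ℝ) * (k:ℝ) ^ (k - 1) * ((-1:ℝ) ^ ((n+1)-k) * (k:ℝ) ^ ((n+1)-k))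
            = (-1:ℝ) ^ ((n+1)-k) * ((n+1).choose k : ℝ) * ((k:ℝ) ^ (k-1) * (k:ℝ) ^ ((n+1)-k)) from by
          ring, e2]
      rw [Finset.sum_congr rfl hterm]
      have hsub : Icc 1 (n+1) ⊆ range (n+2) := by
        intro k hk; rw [mem_range]; have := (mem_Icc.mp hk).2; omega
      rw [Finset.sum_subset hsub (fun k hk hk' => by
        have hk0 : k = 0 := by
          rw [mem_range] at hk; rw [mem_Icc] at hk'; omega
        subst hk0
        simp [zero_pow (by omega : n ≠ 0)])]
      have h0 := alt_sum_pow_eq_zero (n+1) n (by omega) 0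
      simp only [zero_add] at h0
      exact h0
    have := hconst y
    rw [hG0, hH0, sub_zero] at this
    have : G y = H y := by linarith [hconst y]
    simpa [hG, hH] using this

noncomputable def sc (m : ℕ) : ℝ := if m = 0 then 0 else (m:ℝ)^m / m.factorial
noncomputable def tcf (m : ℕ) : ℝ := if m = 0 then 0 else (m:ℝ)^(m-1) / m.factorial
noncomputable def ucf (m : ℕ) : ℝ := if m = 0 then 0 else (m:ℝ)^(m-2) / m.factorial

lemma star (n : ℕ) (hn : 1 ≤ n) :
    ∑ k ∈ Icc 1 n, (n.choose k : ℝ) * (k:ℝ) ^ (k - 1) * (((n - k : ℕ):ℝ)) ^ (n - k)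
      = (n:ℝ) ^ n := by
  have h := abel_forest n hn 0
  simp only [zero_add] at h
  rw [h, ← pow_succ']
  congr 1
  omega

lemma star' (n : ℕ) (hn : 1 ≤ n) :
    ∑ k ∈ Icc 1 (n-1), (n.choose k : ℝ) * (k:ℝ) ^ (k - 1) * (((n - k : ℕ):ℝ)) ^ (n - k)
      = (n:ℝ) ^ n - (n:ℝ) ^ (n-1) := by
  have h := star n hn
  rw [show n = (n-1)+1 by omega, Finset.sum_Icc_succ_top (by omega),
    show (n-1)+1 = n by omega] at h
  simp only [Nat.choose_self, Nat.cast_one, Nat.sub_self, Nat.cast_zero, pow_zero, one_mul,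
    mul_one] at h
  linarith

lemma conv_coef (n : ℕ) (hn : 1 ≤ n) :
    ∑ p ∈ Finset.HasAntidiagonal.antidiagonal n, sc p.1 * tcf p.2 = sc n - tcf n := by
  rw [Finset.Nat.sum_antidiagonal_eq_sum_range_succ_mk]
  have hfacn : ((n.factorial : ℝ)) ≠ 0 := by positivity
  have hsub : Icc 1 (n-1) ⊆ range (n+1) := by
    intro k hk; rw [mem_range]; have := (mem_Icc.mp hk).2; omega
  rw [← Finset.sum_subset hsub (fun i hi hi' => by
    rw [mem_range] at hi; rw [mem_Icc] at hi'
    rcases (by omega : i = 0 ∨ i = n) with rfl | rfl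
    · simp [sc]
    · simp [tcf, Nat.sub_self])]
  have hre : ∑ i ∈ Icc 1 (n-1), sc i * tcf (n - i)
      = ∑ k ∈ Icc 1 (n-1),
          (n.choose k : ℝ) * (k:ℝ) ^ (k - 1) * (((n - k : ℕ):ℝ)) ^ (n - k) / n.factorial := by
    refine Finset.sum_nbij' (fun a => n - a) (fun a => n - a) ?_ ?_ ?_ ?_ ?_
    · intro a ha; simp only [mem_Icc] at ha ⊢; omega
    · intro a ha; simp only [mem_Icc] at ha ⊢; omega
    · intro a ha; simp only [mem_Icc] at ha; omega
    · intro a ha; simp only [mem_Icc] at ha; omega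
    · intro a ha
      rw [mem_Icc] at ha
      have h1 : a ≠ 0 := by omega
      have h2 : n - a ≠ 0 := by omega
      have h3 : n - (n - a) = a := by omega
      rw [sc, tcf, if_neg h1, if_neg h2, h3]
      have hch : ((n.choose (n-a) * (n-a).factorial * a.factorial : ℕ) : ℝ)
          = (n.factorial : ℝ) := by
        have := Nat.choose_mul_factorial_mul_factorial (show n - a ≤ n by omega)
        rw [h3] at this
        exact_mod_cast congrArg (Nat.cast : ℕ → ℝ) this
      push_cast at hch
      have hfa : ((a.factorial : ℝ)) ≠ 0 := by positivity
      have hfna : (((n-a).factorial : ℝ)) ≠ 0 := by positivity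
      field_simp
      rw [← hch]
      ring
  rw [hre, ← Finset.sum_div, star' n hn]
  rw [sc, tcf, if_neg (by omega : n ≠ 0), if_neg (by omega : n ≠ 0)]
  ring

lemma sc_nonneg (m : ℕ) : 0 ≤ sc m := by
  unfold sc; split <;> positivity

lemma tcf_nonneg (m : ℕ) : 0 ≤ tcf m := by
  unfold tcf; split <;> positivity

lemma ucf_nonneg (m : ℕ) : 0 ≤ ucf m := by
  unfold ucf; split <;> positivity

lemma tcf_le_sc (m : ℕ) : tcf m ≤ sc m := by
  unfold tcf sc; split
  · exact le_rfl
  · gcongr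
    · exact_mod_cast Nat.one_le_iff_ne_zero.mpr (by assumption)
    · omega

lemma ucf_le_sc (m : ℕ) : ucf m ≤ sc m := by
  unfold ucf sc; split
  · exact le_rfl
  · gcongr
    · exact_mod_cast Nat.one_le_iff_ne_zero.mpr (by assumption)
    · omega

lemma sc_le_exp (m : ℕ) : sc m ≤ Real.exp 1 ^ m := by
  unfold sc; split
  · positivity
  · rename_i hm
    rw [← Real.exp_nat_mul, mul_one]
    calc (m:ℝ)^m / m.factorial
        ≤ ∑ i ∈ range (m+1), (m:ℝ) ^ i / i.factorial := by
          refine Finset.single_le_sum (f := fun i => (m:ℝ)^i / i.factorial) ?_ ?_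
          · intro i _; positivity
          · exact self_mem_range_succ m
      _ ≤ Real.exp m := Real.sum_le_exp_of_nonneg (by positivity) (m+1)

lemma mul_tcf (m : ℕ) : (m:ℝ) * tcf m = sc m := by
  unfold tcf sc; split
  · rename_i h; subst h; simp
  · rename_i h
    rw [show (m:ℝ) * ((m:ℝ)^(m-1) / m.factorial) = (m:ℝ)^(m-1+1) / m.factorial by
      rw [pow_succ]; ring]
    congr 2
    omega

lemma mul_ucf (m : ℕ) : (m:ℝ) * ucf m = tcf m := by
  unfold ucf tcf; split
  · rename_i h; subst h; simp
  · rename_i h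
    rcases Nat.eq_or_lt_of_le (Nat.one_le_iff_ne_zero.mpr h) with h1 | h1
    · subst h1; norm_num
    · rw [show (m:ℝ) * ((m:ℝ)^(m-2) / m.factorial) = (m:ℝ)^(m-2+1) / m.factorial by
        rw [pow_succ]; ring]
      congr 2
      omega

lemma summable_norm_coef {c : ℕ → ℝ} (hc0 : ∀ m, 0 ≤ c m) (hce : ∀ m, c m ≤ Real.exp 1 ^ m)
    {b : ℝ} (hb0 : 0 ≤ b) (hb1 : b * Real.exp 1 < 1) {x : ℝ} (hx : |x| ≤ b) :
    Summable fun m => ‖c m * x ^ m‖ := by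
  have hbe : 0 ≤ b * Real.exp 1 := by positivity
  refine Summable.of_nonneg_of_le (fun m => norm_nonneg _) (fun m => ?_)
    (summable_geometric_of_lt_one hbe hb1)
  rw [norm_mul, norm_pow]
  calc ‖c m‖ * ‖x‖ ^ m ≤ Real.exp 1 ^ m * b ^ m := by
        apply mul_le_mul
        · rw [Real.norm_eq_abs, abs_of_nonneg (hc0 m)]; exact hce m
        · exact pow_le_pow_left₀ (norm_nonneg x) (by rwa [Real.norm_eq_abs]) m
        · positivity
        · positivity
    _ = (b * Real.exp 1) ^ m := by rw [← mul_pow]; ring_nf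

lemma summable_coef {c : ℕ → ℝ} (hc0 : ∀ m, 0 ≤ c m) (hce : ∀ m, c m ≤ Real.exp 1 ^ m)
    {b : ℝ} (hb0 : 0 ≤ b) (hb1 : b * Real.exp 1 < 1) {x : ℝ} (hx : |x| ≤ b) :
    Summable fun m => c m * x ^ m :=
  (summable_norm_coef hc0 hce hb0 hb1 hx).of_norm

lemma hasDerivAt_psum {c : ℕ → ℝ} (hc0 : ∀ m, 0 ≤ c m)
    (hder : ∀ m : ℕ, (m:ℝ) * c m ≤ Real.exp 1 ^ m)
    {b : ℝ} (hb0 : 0 < b) (hb1 : b * Real.exp 1 < 1) {x : ℝ} (hx : x ∈ Set.Ioo (-b) b) :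
    HasDerivAt (fun z => ∑' m, c m * z ^ m) (∑' m, c m * ((m:ℝ) * x ^ (m-1))) x := by
  refine hasDerivAt_tsum_of_isPreconnected
    (u := fun m => (b * Real.exp 1) ^ m / b)
    (((summable_geometric_of_lt_one (by positivity) hb1)).div_const b)
    isOpen_Ioo ((convex_Ioo _ _).isPreconnected)
    (g := fun m z => c m * z ^ m) (g' := fun m y => c m * ((m:ℝ) * y ^ (m-1)))
    (fun m y _ => (hasDerivAt_pow m y).const_mul (c m))
    (fun m y hy => ?_) (Set.mem_Ioo.mpr ⟨by linarith, hb0⟩) ?_ hx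
  · -- bound
    have hyb : |y| ≤ b := by
      rw [abs_le]; exact ⟨(Set.mem_Ioo.mp hy).1.le, (Set.mem_Ioo.mp hy).2.le⟩
    rw [Real.norm_eq_abs, abs_mul, abs_mul, abs_of_nonneg (hc0 m),
      abs_of_nonneg (by positivity : (0:ℝ) ≤ (m:ℝ)), abs_pow]
    rcases Nat.eq_zero_or_pos m with rfl | hm
    · simp; positivity
    · calc c m * ((m:ℝ) * |y| ^ (m-1)) = ((m:ℝ) * c m) * |y| ^ (m-1) := by ring
        _ ≤ Real.exp 1 ^ m * b ^ (m-1) := by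
            apply mul_le_mul (hder m) (pow_le_pow_left₀ (abs_nonneg y) hyb _) (by positivity)
              (by positivity)
        _ = (b * Real.exp 1) ^ m / b := by
            rw [mul_pow]
            rw [show m = (m-1)+1 by omega]
            field_simp
            ring_nf; rw [show 1 + (m - 1) - 1 = m - 1 by omega]
  · -- summable at 0
    exact (hasSum_single (f := fun m => c m * (0:ℝ) ^ m) 0
      (fun m hm => by simp [zero_pow hm])).summable

noncomputable def Tf (z : ℝ) : ℝ := ∑' m, tcf m * z ^ m
noncomputable def Sf (z : ℝ) : ℝ := ∑' m, sc m * z ^ m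
noncomputable def Uf (z : ℝ) : ℝ := ∑' m, ucf m * z ^ m
noncomputable def DT (x : ℝ) : ℝ := ∑' m, tcf m * ((m:ℝ) * x ^ (m-1))
noncomputable def DU (x : ℝ) : ℝ := ∑' m, ucf m * ((m:ℝ) * x ^ (m-1))

lemma tcf_one : tcf 1 = 1 := by norm_num [tcf]
lemma ucf_one : ucf 1 = 1 := by norm_num [ucf]

lemma Tf_zero : Tf 0 = 0 := by
  rw [Tf, tsum_eq_single 0 (fun m hm => by simp [zero_pow hm])]
  simp [tcf]

lemma Uf_zero : Uf 0 = 0 := by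
  rw [Uf, tsum_eq_single 0 (fun m hm => by simp [zero_pow hm])]
  simp [ucf]

lemma DT_zero : DT 0 = 1 := by
  rw [DT, tsum_eq_single 1 (fun m hm => ?_)]
  · rw [tcf_one]; norm_num
  · match m, hm with
    | 0, _ => simp
    | (m+2), _ => simp [zero_pow]

lemma DU_zero : DU 0 = 1 := by
  rw [DU, tsum_eq_single 1 (fun m hm => ?_)]
  · rw [ucf_one]; norm_num
  · match m, hm with
    | 0, _ => simp
    | (m+2), _ => simp [zero_pow]

lemma key1 (x : ℝ) : x * DT x = Sf x := by
  rw [DT, ← tsum_mul_left, Sf]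
  apply tsum_congr
  intro m
  match m with
  | 0 => simp [sc]
  | (m+1) =>
    rw [← mul_tcf (m+1)]
    push_cast
    ring

lemma key2 (x : ℝ) : x * DU x = Tf x := by
  rw [DU, ← tsum_mul_left, Tf]
  apply tsum_congr
  intro m
  match m with
  | 0 => simp [tcf]
  | (m+1) =>
    rw [← mul_ucf (m+1)]
    push_cast
    ring

lemma phi_strictMono : StrictMonoOn (fun x : ℝ => x * Real.exp (-x)) (Set.Icc 0 1) := by
  apply strictMonoOn_of_deriv_pos (convex_Icc 0 1)
  · exact (continuous_id.mul (Real.continuous_exp.comp continuous_neg)).continuousOn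
  · intro x hx
    rw [interior_Icc] at hx
    have hd : HasDerivAt (fun x : ℝ => x * Real.exp (-x)) ((1 - x) * Real.exp (-x)) x := by
      have h1 : HasDerivAt (fun x : ℝ => Real.exp (-x)) (Real.exp (-x) * (-1)) x :=
        ((hasDerivAt_id x).neg).exp
      have := (hasDerivAt_id x).fun_mul h1
      refine this.congr_deriv ?_
      simp only [id_eq]
      ring
    rw [hd.deriv]
    have h1 := hx.1
    have h2 := hx.2
    have := Real.exp_pos (-x)
    nlinarith

lemma const_of_hasDerivAt_zero {f : ℝ → ℝ} {s : Set ℝ} (hconv : Convex ℝ s) (hopen : IsOpen s)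
    (h : ∀ x ∈ s, HasDerivAt f 0 x) {x y : ℝ} (hx : x ∈ s) (hy : y ∈ s) : f x = f y := by
  refine hconv.is_const_of_fderivWithin_eq_zero
    (fun z hz => ((h z hz).differentiableAt).differentiableWithinAt) (fun z hz => ?_) hx hy
  rw [fderivWithin_of_isOpen hopen hz, ((h z hz).hasFDerivAt).fderiv]
  ext v
  simp

lemma tree_fn (t : ℝ) (ht0 : 0 < t) (ht1 : t < 1) :
    Tf (t * Real.exp (-t)) = t ∧ Uf (t * Real.exp (-t)) = t - t^2/2 := by
  set z := t * Real.exp (-t) with hzdef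
  have hz0 : 0 < z := by positivity
  have hz1 : z < Real.exp (-1) := by
    have h := phi_strictMono ⟨ht0.le, ht1.le⟩ ⟨zero_le_one, le_rfl⟩ ht1
    simpa using h
  set b := (z + Real.exp (-1))/2 with hbdef
  have hbz : z < b := by simp only [hbdef]; linarith
  have hb0 : 0 < b := by simp only [hbdef]; linarith
  have hbe : b < Real.exp (-1) := by simp only [hbdef]; linarith
  have hb1 : b * Real.exp 1 < 1 := by
    have hee : Real.exp (-1) * Real.exp 1 = 1 := by
      rw [← Real.exp_add]; norm_num
    have := mul_lt_mul_of_pos_right hbe (Real.exp_pos 1)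
    rwa [hee] at this
  have hxb : ∀ {x : ℝ}, x ∈ Set.Ioo (-b) b → |x| ≤ b := by
    intro x hx
    rw [abs_le]
    exact ⟨hx.1.le, hx.2.le⟩
  -- derivatives
  have hT : ∀ x ∈ Set.Ioo (-b) b, HasDerivAt Tf (DT x) x := fun x hx =>
    hasDerivAt_psum tcf_nonneg (fun m => (mul_tcf m).le.trans (sc_le_exp m)) hb0 hb1 hx
  have hU : ∀ x ∈ Set.Ioo (-b) b, HasDerivAt Uf (DU x) x := fun x hx =>
    hasDerivAt_psum ucf_nonneg
      (fun m => ((mul_ucf m).le.trans (tcf_le_sc m)).trans (sc_le_exp m)) hb0 hb1 hx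
  -- summability
  have hsumT : ∀ {x : ℝ}, x ∈ Set.Ioo (-b) b → Summable fun m => tcf m * x ^ m := fun hx =>
    summable_coef tcf_nonneg (fun m => (tcf_le_sc m).trans (sc_le_exp m)) hb0.le hb1 (hxb hx)
  have hsumS : ∀ {x : ℝ}, x ∈ Set.Ioo (-b) b → Summable fun m => sc m * x ^ m := fun hx =>
    summable_coef sc_nonneg sc_le_exp hb0.le hb1 (hxb hx)
  -- Cauchy product
  have cauchy : ∀ x ∈ Set.Ioo (-b) b, Sf x * Tf x = Sf x - Tf x := by
    intro x hx
    rw [Sf, Tf, tsum_mul_tsum_eq_tsum_sum_antidiagonal_of_summable_norm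
      (summable_norm_coef sc_nonneg sc_le_exp hb0.le hb1 (hxb hx))
      (summable_norm_coef tcf_nonneg (fun m => (tcf_le_sc m).trans (sc_le_exp m))
        hb0.le hb1 (hxb hx))]
    have hterm : ∀ n : ℕ, (∑ p ∈ Finset.HasAntidiagonal.antidiagonal n, (sc p.1 * x ^ p.1) * (tcf p.2 * x ^ p.2))
        = (sc n - tcf n) * x ^ n := by
      intro n
      rcases Nat.eq_zero_or_pos n with rfl | hn
      · simp [sc, tcf]
      · have hp' : ∀ p ∈ Finset.HasAntidiagonal.antidiagonal n, sc p.1 * x ^ p.1 * (tcf p.2 * x ^ p.2)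
            = (sc p.1 * tcf p.2) * x ^ n := by
          intro p hp
          rw [Finset.HasAntidiagonal.mem_antidiagonal] at hp
          rw [← hp, pow_add]
          ring
        rw [Finset.sum_congr rfl hp', ← Finset.sum_mul, conv_coef n hn]
    rw [tsum_congr hterm]
    calc ∑' n, ((sc n - tcf n) * x ^ n)
        = ∑' n, (sc n * x ^ n - tcf n * x ^ n) := by
          apply tsum_congr; intro n; ring
      _ = Sf x - Tf x := Summable.tsum_sub (hsumS hx) (hsumT hx)
  -- key pointwise identity
  have key3 : ∀ x ∈ Set.Ioo (-b) b, x * DT x * (1 - Tf x) = Tf x := by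
    intro x hx
    have h1 := cauchy x hx
    rw [key1 x]
    nlinarith [h1]
  -- the function W
  set W : ℝ → ℝ := fun x => Tf x * Real.exp (-Tf x) with hWdef
  have hW : ∀ x ∈ Set.Ioo (-b) b,
      HasDerivAt W (DT x * (1 - Tf x) * Real.exp (-Tf x)) x := by
    intro x hx
    have h1 : HasDerivAt (fun y => Real.exp (-Tf y)) (Real.exp (-Tf x) * (-DT x)) x :=
      ((hT x hx).neg).exp
    have h2 := (hT x hx).fun_mul h1
    refine h2.congr_deriv ?_
    ring
  have hmem0 : (0:ℝ) ∈ Set.Ioo (-b) b := ⟨by linarith, hb0⟩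
  have hW0val : W 0 = 0 := by rw [hWdef]; simp [Tf_zero]
  have hW0 : HasDerivAt W 1 0 := by
    have := hW 0 hmem0
    rwa [DT_zero, Tf_zero, sub_zero, neg_zero, Real.exp_zero, mul_one, mul_one] at this
  -- g = W x / x has zero derivative on (0, b)
  have hg : ∀ x ∈ Set.Ioo (0:ℝ) b, HasDerivAt (fun y => W y / y) 0 x := by
    intro x hx
    have hx0 : x ≠ 0 := ne_of_gt hx.1
    have hxm : x ∈ Set.Ioo (-b) b := ⟨by linarith [hx.1, hb0], hx.2⟩
    have h1 := (hW x hxm).div (hasDerivAt_id x) hx0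
    have hnum : DT x * (1 - Tf x) * Real.exp (-Tf x) * x - W x * 1 = 0 := by
      have h3 : x * DT x * (1 - Tf x) = Tf x := key3 x hxm
      rw [hWdef]
      calc DT x * (1 - Tf x) * Real.exp (-Tf x) * x - Tf x * Real.exp (-Tf x) * 1
          = (x * DT x * (1 - Tf x)) * Real.exp (-Tf x) - Tf x * Real.exp (-Tf x) := by ring
        _ = 0 := by rw [h3]; ring
    simp only [id_eq] at h1
    rw [hnum] at h1
    simpa [Pi.div_def] using h1
  -- g is constant on (0,b), with value 1 by the slope limit
  have hWg : ∀ x ∈ Set.Ioo (0:ℝ) b, W x / x = W (b/2) / (b/2) := by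
    intro x hx
    exact const_of_hasDerivAt_zero (convex_Ioo 0 b) isOpen_Ioo hg hx
      ⟨half_pos hb0, half_lt_self hb0⟩
  have hslope : Tendsto (fun x => W x / x) (nhdsWithin 0 {(0:ℝ)}ᶜ) (nhds 1) := by
    have := hasDerivAt_iff_tendsto_slope.mp hW0
    apply this.congr'
    filter_upwards [Filter.univ_mem] with y _
    rw [slope_def_field]
    rw [hW0val]
    simp [div_eq_mul_inv]
  have hslope' : Tendsto (fun x => W x / x) (nhdsWithin 0 (Set.Ioi 0)) (nhds 1) :=
    hslope.mono_left (nhdsWithin_mono 0 (fun y hy => ne_of_gt hy))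
  have hconst' : Tendsto (fun x => W x / x) (nhdsWithin 0 (Set.Ioi 0))
      (nhds (W (b/2) / (b/2))) := by
    apply Tendsto.congr' ?_ tendsto_const_nhds
    filter_upwards [Ioo_mem_nhdsGT_of_mem (Set.mem_Ico.mpr ⟨le_refl (0:ℝ), hb0⟩)] with y hy
    exact (hWg y hy).symm
  have hc1 : W (b/2) / (b/2) = 1 := tendsto_nhds_unique hconst' hslope'
  have hWx : ∀ x ∈ Set.Ioo (0:ℝ) b, W x = x := by
    intro x hx
    have := hWg x hx
    rw [hc1] at this
    exact (div_eq_one_iff_eq (ne_of_gt hx.1)).mp this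
  -- Tf z < 1
  have hTz_nonneg : 0 ≤ Tf z :=
    tsum_nonneg (fun m => mul_nonneg (tcf_nonneg m) (pow_nonneg hz0.le m))
  have hTz_lt : Tf z < 1 := by
    by_contra hge
    push_neg at hge
    have hcont : ContinuousOn Tf (Set.Icc 0 z) := by
      intro x hx
      have hxm : x ∈ Set.Ioo (-b) b := ⟨by linarith [hx.1], lt_of_le_of_lt hx.2 hbz⟩
      exact (hT x hxm).continuousAt.continuousWithinAt
    have hIVT := intermediate_value_Icc hz0.le hcont
    have h1mem : (1:ℝ) ∈ Set.Icc (Tf 0) (Tf z) := by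
      rw [Tf_zero]; exact ⟨zero_le_one, hge⟩
    obtain ⟨x₂, hx₂m, hx₂⟩ := hIVT h1mem
    have hx₂0 : x₂ ≠ 0 := by
      intro h
      rw [h, Tf_zero] at hx₂
      norm_num at hx₂
    have hx₂mem : x₂ ∈ Set.Ioo (0:ℝ) b :=
      ⟨lt_of_le_of_ne hx₂m.1 (Ne.symm hx₂0), lt_of_le_of_lt hx₂m.2 hbz⟩
    have := hWx x₂ hx₂mem
    rw [hWdef] at this
    simp only at this
    rw [hx₂] at this
    rw [one_mul] at this
    have : x₂ < Real.exp (-1) := lt_trans (lt_of_le_of_lt hx₂m.2 hbz) hbe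
    linarith [this]
  -- Tf z = t by injectivity
  have hWz := hWx z ⟨hz0, hbz⟩
  have hTz : Tf z = t := by
    apply phi_strictMono.injOn ⟨hTz_nonneg, hTz_lt.le⟩ ⟨ht0.le, ht1.le⟩
    simp only
    rw [hWdef] at hWz
    simp only at hWz
    rw [hWz]
  refine ⟨hTz, ?_⟩
  -- now the U identity
  have hD : ∀ x ∈ Set.Ioo (-b) b,
      HasDerivAt (fun y => Uf y - Tf y + Tf y * Tf y / 2) 0 x := by
    intro x hx
    have h1 := ((hU x hx).sub (hT x hx)).add (((hT x hx).mul (hT x hx)).div_const 2)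
    have h2 : DU x - DT x + (DT x * Tf x + Tf x * DT x) / 2 = 0 := by
      rcases eq_or_ne x 0 with rfl | hx0
      · rw [DU_zero, DT_zero, Tf_zero]; ring
      · have e1 := key1 x
        have e2 := key2 x
        have e3 := cauchy x hx
        have hmul : x * (DU x - DT x + (DT x * Tf x + Tf x * DT x) / 2) = 0 := by
          linear_combination e2 - e1 + Tf x * e1 + e3
        exact (mul_eq_zero.mp hmul).resolve_left hx0
    rwa [h2] at h1
  have hDconst := const_of_hasDerivAt_zero (convex_Ioo (-b) b) isOpen_Ioo hD
    ⟨by linarith, hbz⟩ hmem0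
  rw [Tf_zero, Uf_zero, hTz] at hDconst
  have : Uf z = t - t * t / 2 := by linarith [hDconst]
  rw [this]
  ring

lemma lamq_lt_one (lam q : ℝ) (hlam : 1 < lam) (hq0 : 0 < q) (hq1 : q < 1)
    (hfix : q = Real.exp (-lam * (1 - q))) : lam * q < 1 := by
  by_contra hge
  push_neg at hge
  have hmono : StrictMonoOn (fun x => Real.exp (-lam * (1 - x)) - x) (Set.Icc q 1) := by
    apply strictMonoOn_of_deriv_pos (convex_Icc q 1)
    · apply Continuous.continuousOn
      exact (Real.continuous_exp.comp (continuous_const.mul (continuous_const.sub continuous_id))).sub continuous_id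
    · intro x hx
      rw [interior_Icc] at hx
      have h1 : HasDerivAt (fun x : ℝ => -lam * (1 - x)) lam x := by
        have h := ((hasDerivAt_const x (1:ℝ)).sub (hasDerivAt_id x)).const_mul (-lam)
        simp only [id_eq, zero_sub, mul_neg, mul_one, neg_neg] at h
        exact h
      have hd : HasDerivAt (fun x : ℝ => Real.exp (-lam * (1 - x)) - x)
          (Real.exp (-lam * (1 - x)) * lam - 1) x := (h1.exp).sub (hasDerivAt_id x)
      rw [hd.deriv]
      have hlt : Real.exp (-lam * (1 - q)) < Real.exp (-lam * (1 - x)) := by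
        apply Real.exp_lt_exp.mpr
        nlinarith [hx.1]
      rw [← hfix] at hlt
      nlinarith [hlt]
  have h2 := hmono (Set.left_mem_Icc.mpr hq1.le) (Set.right_mem_Icc.mpr hq1.le) hq1
  simp only at h2
  rw [← hfix] at h2
  norm_num at h2

/-- For `λ > 1`, if `q` is the extinction probability of a Poisson(λ)
Galton–Watson process (so `q = e^{-λ(1-q)}` with `0 < q < 1`), then
`β(λ) = Σ_{m ≥ 1} (1/m)·e^{-λm}(λm)^{m-1}/m!` satisfies `β = q − λq²/2`.
(The sum is reindexed by `m = k + 1`, `k : ℕ`.) -/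
theorem stmt8 (lam q : ℝ) (hlam : 1 < lam) (hq0 : 0 < q) (hq1 : q < 1)
    (hfix : q = Real.exp (-lam * (1 - q))) :
    ∑' k : ℕ, (1 / ((k : ℝ) + 1)) * Real.exp (-lam * ((k : ℝ) + 1))
        * (lam * ((k : ℝ) + 1)) ^ k / (Nat.factorial (k + 1))
      = q - lam * q ^ 2 / 2 := by
  have hlam0 : (0:ℝ) < lam := by linarith
  set t := lam * q with htdef
  have ht0 : 0 < t := mul_pos hlam0 hq0
  have ht1 : t < 1 := lamq_lt_one lam q hlam hq0 hq1 hfix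
  obtain ⟨hTz, hUz⟩ := tree_fn t ht0 ht1
  set z := t * Real.exp (-t) with hzdef
  have hz0 : 0 < z := by positivity
  have hz1 : z < Real.exp (-1) := by
    have h := phi_strictMono ⟨ht0.le, ht1.le⟩ ⟨zero_le_one, le_rfl⟩ ht1
    simpa using h
  have hz1' : z * Real.exp 1 < 1 := by
    have hee : Real.exp (-1) * Real.exp 1 = 1 := by
      rw [← Real.exp_add]; norm_num
    have := mul_lt_mul_of_pos_right hz1 (Real.exp_pos 1)
    rwa [hee] at this
  have hsummU : Summable (fun m => ucf m * z ^ m) :=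
    summable_coef ucf_nonneg (fun m => (ucf_le_sc m).trans (sc_le_exp m)) hz0.le hz1'
      (le_of_eq (abs_of_pos hz0))
  have hexp : Real.exp (-lam) = q * Real.exp (-t) := by
    calc Real.exp (-lam) = Real.exp (-lam * (1 - q) + -(lam * q)) := by congr 1; ring
      _ = Real.exp (-lam * (1 - q)) * Real.exp (-(lam * q)) := Real.exp_add _ _
      _ = q * Real.exp (-t) := by rw [← hfix]
  have hterm : ∀ k : ℕ, (1 / ((k : ℝ) + 1)) * Real.exp (-lam * ((k : ℝ) + 1))
        * (lam * ((k : ℝ) + 1)) ^ k / (Nat.factorial (k + 1))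
      = (1/lam) * (ucf (k+1) * z ^ (k+1)) := by
    intro k
    have hfct : (((k+1).factorial : ℕ) : ℝ) ≠ 0 := by positivity
    have hE : Real.exp (-lam * ((k:ℝ) + 1)) = (q * Real.exp (-t)) ^ (k+1) := by
      rw [← hexp, ← Real.exp_nat_mul]
      congr 1
      push_cast
      ring
    rw [hE, ucf, if_neg (Nat.succ_ne_zero k), hzdef, htdef]
    have hEpos : (0:ℝ) < Real.exp (-t) := Real.exp_pos _
    rcases Nat.eq_zero_or_pos k with rfl | hk
    · norm_num [Nat.factorial]
      field_simp
    · obtain ⟨j, rfl⟩ : ∃ j, k = j + 1 := ⟨k - 1, by omega⟩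
      have he2 : (j + 1 + 1) - 2 = j := by omega
      rw [he2]
      have hK : ((j + 1 + 1 : ℕ) : ℝ) = (j:ℝ) + 2 := by push_cast; ring
      rw [hK]
      have hKne : ((j:ℝ) + 2) ≠ 0 := by positivity
      rw [mul_pow, mul_pow]
      push_cast
      field_simp
      ring
  rw [tsum_congr hterm, tsum_mul_left]
  have hshift : ∑' k : ℕ, ucf (k+1) * z ^ (k+1) = Uf z := by
    have h0 := Summable.tsum_eq_zero_add hsummU
    rw [show ucf 0 * z ^ 0 = 0 by simp [ucf], zero_add] at h0
    rw [← h0, Uf]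
  rw [hshift, hUz, htdef]
  field_simp
end

section
/- ∫₀^∞ e^{−t}(1 − t/(e^t−1))² dt = 5 − 4ζ(3), where ζ(3) = Σ_{k≥1} 1/k³. -/
open Real MeasureTheory Set

private lemma exp_sub_one_pos' {t : ℝ} (ht : 0 < t) : 0 < Real.exp t - 1 :=
  sub_pos.mpr (Real.one_lt_exp_iff.mpr ht)

/-- `∫ t in Ioi 0, t * exp (-(c*t)) = 1/c^2` -/
private lemma int_pow1 {c : ℝ} (hc : 0 < c) :
    ∫ t in Ioi (0:ℝ), t * Real.exp (-(c*t)) = 1/c^2 := by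
  have h := Real.integral_rpow_mul_exp_neg_mul_Ioi (a := 2) (r := c) two_pos hc
  rw [show ∫ t in Ioi (0:ℝ), t * Real.exp (-(c*t))
      = ∫ t in Ioi (0:ℝ), t ^ ((2:ℝ)-1) * Real.exp (-(c*t)) from
    setIntegral_congr_fun measurableSet_Ioi (fun t ht => by
      rw [show (2:ℝ)-1 = 1 by norm_num, Real.rpow_one]), h]
  have hg : Real.Gamma 2 = 1 := by
    rw [show (2:ℝ) = ((1:ℕ):ℝ)+1 by norm_num, Real.Gamma_nat_eq_factorial]; norm_num
  rw [hg, Real.rpow_two, mul_one, div_pow, one_pow]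

/-- `∫ t in Ioi 0, t^2 * exp (-(c*t)) = 2/c^3` -/
private lemma int_pow2 {c : ℝ} (hc : 0 < c) :
    ∫ t in Ioi (0:ℝ), t^2 * Real.exp (-(c*t)) = 2/c^3 := by
  have h := Real.integral_rpow_mul_exp_neg_mul_Ioi (a := 3) (r := c) three_pos hc
  rw [show ∫ t in Ioi (0:ℝ), t^2 * Real.exp (-(c*t))
      = ∫ t in Ioi (0:ℝ), t ^ ((3:ℝ)-1) * Real.exp (-(c*t)) from
    setIntegral_congr_fun measurableSet_Ioi (fun t ht => by
      rw [show (3:ℝ)-1 = 2 by norm_num, Real.rpow_two]), h]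
  have hg : Real.Gamma 3 = 2 := by
    rw [show (3:ℝ) = ((2:ℕ):ℝ)+1 by norm_num, Real.Gamma_nat_eq_factorial]; norm_num
  rw [hg, show (3:ℝ) = ((3:ℕ):ℝ) by norm_num, Real.rpow_natCast, div_pow, one_pow]
  ring

private lemma intOn_pow1 {c : ℝ} (hc : 0 < c) :
    IntegrableOn (fun t : ℝ => t * Real.exp (-(c*t))) (Ioi 0) := by
  have h := integrableOn_rpow_mul_exp_neg_mul_rpow (s := 1) (p := 1) (b := c)
    (by norm_num) one_pos hc
  refine h.congr_fun (fun t ht => ?_) measurableSet_Ioi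
  dsimp only
  rw [Real.rpow_one, neg_mul]

private lemma intOn_pow2 {c : ℝ} (hc : 0 < c) :
    IntegrableOn (fun t : ℝ => t^2 * Real.exp (-(c*t))) (Ioi 0) := by
  have h := integrableOn_rpow_mul_exp_neg_mul_rpow (s := 2) (p := 1) (b := c)
    (by norm_num) one_pos hc
  refine h.congr_fun (fun t ht => ?_) measurableSet_Ioi
  dsimp only
  rw [Real.rpow_one, Real.rpow_two, neg_mul]

private lemma summable_shift (c : ℕ) {p : ℕ} (hp : 1 < p) :
    Summable (fun k : ℕ => 1/((k:ℝ)+c)^p) := by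
  have h := (summable_nat_add_iff (f := fun n : ℕ => 1/(n:ℝ)^p) c).mpr
    (summable_one_div_nat_pow.mpr hp)
  exact h.congr (fun n => by push_cast; ring_nf)

private lemma sum1 {t : ℝ} (ht : 0 < t) :
    ∑' k : ℕ, t * Real.exp (-(((k:ℝ)+2)*t)) = t * Real.exp (-t) / (Real.exp t - 1) := by
  set r := Real.exp (-t) with hr
  have hr0 : 0 ≤ r := (Real.exp_pos _).le
  have hr1 : r < 1 := Real.exp_lt_one_iff.mpr (by linarith)
  have hterm : ∀ k : ℕ, t * Real.exp (-(((k:ℝ)+2)*t)) = (t * r^2) * r^k := by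
    intro k
    have hx : Real.exp (-(((k:ℝ)+2)*t)) = Real.exp (-t)^2 * Real.exp (-t)^k := by
      rw [← Real.exp_nat_mul, ← Real.exp_nat_mul, ← Real.exp_add]
      congr 1; push_cast; ring
    rw [hr, hx]; ring
  rw [tsum_congr hterm, tsum_mul_left, tsum_geometric_of_lt_one hr0 hr1]
  have he : Real.exp t ≠ 0 := (Real.exp_pos t).ne'
  have h1 : Real.exp t - 1 ≠ 0 := (exp_sub_one_pos' ht).ne'
  have h2 : (1:ℝ) - r ≠ 0 := sub_ne_zero.mpr (ne_of_lt hr1).symm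
  rw [hr, Real.exp_neg]
  field_simp

private lemma sum2 {t : ℝ} (ht : 0 < t) :
    ∑' k : ℕ, ((k:ℝ)+1) * (t^2 * Real.exp (-(((k:ℝ)+3)*t)))
      = t^2 * Real.exp (-t) / (Real.exp t - 1)^2 := by
  set r := Real.exp (-t) with hr
  have hr0 : 0 < r := Real.exp_pos _
  have hr1 : r < 1 := Real.exp_lt_one_iff.mpr (by linarith)
  have hrn : ‖r‖ < 1 := by rw [Real.norm_eq_abs, abs_of_pos hr0]; exact hr1
  have hgeom := hasSum_coe_mul_geometric_of_norm_lt_one (𝕜 := ℝ) hrn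
  have hshift : ∑' k : ℕ, ((k:ℝ)+1) * r^(k+1) = r / (1-r)^2 := by
    have h := Summable.tsum_eq_zero_add hgeom.summable
    rw [hgeom.tsum_eq] at h
    simp only [Nat.cast_zero, zero_mul, pow_zero, zero_add] at h
    refine Eq.trans (tsum_congr fun k => ?_) h.symm
    push_cast
    ring
  have hterm : ∀ k : ℕ, ((k:ℝ)+1) * (t^2 * Real.exp (-(((k:ℝ)+3)*t)))
      = (t^2 * r^2) * (((k:ℝ)+1) * r^(k+1)) := by
    intro k
    have hx : Real.exp (-(((k:ℝ)+3)*t)) = Real.exp (-t)^2 * Real.exp (-t)^(k+1) := by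
      rw [← Real.exp_nat_mul, ← Real.exp_nat_mul, ← Real.exp_add]
      congr 1; push_cast; ring
    rw [hr, hx]; ring
  rw [tsum_congr hterm, tsum_mul_left, hshift]
  have he : Real.exp t ≠ 0 := (Real.exp_pos t).ne'
  have h1 : Real.exp t - 1 ≠ 0 := (exp_sub_one_pos' ht).ne'
  have h2 : (1:ℝ) - r ≠ 0 := sub_ne_zero.mpr (ne_of_lt hr1).symm
  rw [hr, Real.exp_neg]
  field_simp
  try ring

private lemma g_integrable :
    IntegrableOn (fun t : ℝ => t * Real.exp (-t) / (Real.exp t - 1)) (Ioi 0) := by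
  have hbound : IntegrableOn (fun t : ℝ => Real.exp (-t)) (Ioi 0) := by
    have := exp_neg_integrableOn_Ioi 0 one_pos
    exact this.congr_fun (fun t _ => by norm_num) measurableSet_Ioi
  refine Integrable.mono' hbound ?_ ?_
  · refine ContinuousOn.aestronglyMeasurable ?_ measurableSet_Ioi
    exact ContinuousOn.div
      (Continuous.continuousOn (by continuity))
      (Continuous.continuousOn (by continuity))
      (fun x hx => (exp_sub_one_pos' hx).ne')
  · rw [ae_restrict_iff' measurableSet_Ioi]
    filter_upwards with t
    intro ht
    have ht0 : 0 < t := ht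
    have h1 : 0 < Real.exp t - 1 := exp_sub_one_pos' ht
    have h2 : t ≤ Real.exp t - 1 := by linarith [Real.add_one_le_exp t]
    rw [Real.norm_eq_abs, abs_of_nonneg (div_nonneg (by positivity) h1.le)]
    rw [div_le_iff₀ h1]
    nlinarith [mul_le_mul_of_nonneg_right h2 (Real.exp_pos (-t)).le]

private lemma h_integrable :
    IntegrableOn (fun t : ℝ => t^2 * Real.exp (-t) / (Real.exp t - 1)^2) (Ioi 0) := by
  have hbound : IntegrableOn (fun t : ℝ => Real.exp (-t)) (Ioi 0) := by
    have := exp_neg_integrableOn_Ioi 0 one_pos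
    exact this.congr_fun (fun t _ => by norm_num) measurableSet_Ioi
  refine Integrable.mono' hbound ?_ ?_
  · refine ContinuousOn.aestronglyMeasurable ?_ measurableSet_Ioi
    exact ContinuousOn.div
      (Continuous.continuousOn (by continuity))
      (Continuous.continuousOn (by continuity))
      (fun x hx => pow_ne_zero _ (exp_sub_one_pos' hx).ne')
  · rw [ae_restrict_iff' measurableSet_Ioi]
    filter_upwards with t
    intro ht
    have h1 : 0 < Real.exp t - 1 := exp_sub_one_pos' ht
    have h2 : t ≤ Real.exp t - 1 := by linarith [Real.add_one_le_exp t]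
    have h4 : t^2 ≤ (Real.exp t - 1)^2 := by nlinarith [(show (0:ℝ) < t from ht).le]
    rw [Real.norm_eq_abs,
      abs_of_nonneg (div_nonneg (by positivity) (by positivity : (0:ℝ) ≤ (Real.exp t - 1)^2))]
    rw [div_le_iff₀ (by positivity : (0:ℝ) < (Real.exp t - 1)^2)]
    nlinarith [mul_le_mul_of_nonneg_right h4 (Real.exp_pos (-t)).le]

private lemma g_int_eq :
    ∫ t in Ioi (0:ℝ), t * Real.exp (-t) / (Real.exp t - 1)
      = ∑' k : ℕ, 1/((k:ℝ)+2)^2 := by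
  have hint : ∀ k : ℕ, IntegrableOn (fun t : ℝ => t * Real.exp (-(((k:ℝ)+2)*t))) (Ioi 0) :=
    fun k => intOn_pow1 (by positivity)
  have hval : ∀ k : ℕ, ∫ t in Ioi (0:ℝ), t * Real.exp (-(((k:ℝ)+2)*t)) = 1/((k:ℝ)+2)^2 :=
    fun k => int_pow1 (by positivity)
  have hnorm : ∀ k : ℕ, ∫ t in Ioi (0:ℝ), ‖t * Real.exp (-(((k:ℝ)+2)*t))‖ = 1/((k:ℝ)+2)^2 := by
    intro k
    rw [← hval k]
    refine setIntegral_congr_fun measurableSet_Ioi (fun t ht => ?_)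
    have ht0 : 0 < t := ht
    rw [Real.norm_eq_abs, abs_of_nonneg (by positivity)]
  have hsum : Summable (fun k : ℕ => ∫ t in Ioi (0:ℝ), ‖t * Real.exp (-(((k:ℝ)+2)*t))‖) := by
    refine (summable_shift 2 one_lt_two).congr (fun k => ?_)
    rw [hnorm k]; push_cast; ring_nf
  have hswap := integral_tsum_of_summable_integral_norm
    (F := fun (k : ℕ) (t : ℝ) => t * Real.exp (-(((k:ℝ)+2)*t)))
    (μ := volume.restrict (Ioi 0)) hint hsum
  rw [show ∫ t in Ioi (0:ℝ), t * Real.exp (-t) / (Real.exp t - 1)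
      = ∫ t in Ioi (0:ℝ), ∑' k : ℕ, t * Real.exp (-(((k:ℝ)+2)*t)) from
    (setIntegral_congr_fun measurableSet_Ioi (fun t ht => (sum1 ht).symm))]
  rw [← hswap]
  exact tsum_congr hval

private lemma h_int_eq :
    ∫ t in Ioi (0:ℝ), t^2 * Real.exp (-t) / (Real.exp t - 1)^2
      = ∑' k : ℕ, ((k:ℝ)+1) * (2/((k:ℝ)+3)^3) := by
  have hint : ∀ k : ℕ, IntegrableOn
      (fun t : ℝ => ((k:ℝ)+1) * (t^2 * Real.exp (-(((k:ℝ)+3)*t)))) (Ioi 0) :=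
    fun k => (intOn_pow2 (by positivity)).const_mul _
  have hval : ∀ k : ℕ, ∫ t in Ioi (0:ℝ), ((k:ℝ)+1) * (t^2 * Real.exp (-(((k:ℝ)+3)*t)))
      = ((k:ℝ)+1) * (2/((k:ℝ)+3)^3) := by
    intro k
    rw [integral_const_mul, int_pow2 (by positivity)]
  have hnorm : ∀ k : ℕ, ∫ t in Ioi (0:ℝ), ‖((k:ℝ)+1) * (t^2 * Real.exp (-(((k:ℝ)+3)*t)))‖
      = ((k:ℝ)+1) * (2/((k:ℝ)+3)^3) := by
    intro k
    rw [← hval k]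
    refine setIntegral_congr_fun measurableSet_Ioi (fun t ht => ?_)
    have ht0 : 0 < t := ht
    rw [Real.norm_eq_abs, abs_of_nonneg (by positivity)]
  have hsum : Summable (fun k : ℕ =>
      ∫ t in Ioi (0:ℝ), ‖((k:ℝ)+1) * (t^2 * Real.exp (-(((k:ℝ)+3)*t)))‖) := by
    refine Summable.of_nonneg_of_le (fun k => ?_) (fun k => ?_)
      ((summable_shift 3 one_lt_two).mul_left 2)
    · rw [hnorm k]; positivity
    · rw [hnorm k]
      have h3 : (0:ℝ) < (k:ℝ)+3 := by positivity
      calc ((k:ℝ)+1) * (2/((k:ℝ)+3)^3) ≤ ((k:ℝ)+3) * (2/((k:ℝ)+3)^3) := by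
            exact mul_le_mul_of_nonneg_right (by linarith) (by positivity)
        _ = 2 * (1/((k:ℝ)+3)^2) := by field_simp
  have hswap := integral_tsum_of_summable_integral_norm
    (F := fun (k : ℕ) (t : ℝ) => ((k:ℝ)+1) * (t^2 * Real.exp (-(((k:ℝ)+3)*t))))
    (μ := volume.restrict (Ioi 0)) hint hsum
  rw [show ∫ t in Ioi (0:ℝ), t^2 * Real.exp (-t) / (Real.exp t - 1)^2
      = ∫ t in Ioi (0:ℝ), ∑' k : ℕ, ((k:ℝ)+1) * (t^2 * Real.exp (-(((k:ℝ)+3)*t))) from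
    (setIntegral_congr_fun measurableSet_Ioi (fun t ht => (sum2 ht).symm))]
  rw [← hswap]
  exact tsum_congr hval

private lemma tsum_shift1 {f : ℕ → ℝ} (hf : Summable f) :
    ∑' k : ℕ, f (k+1) = (∑' k, f k) - f 0 := by
  rw [Summable.tsum_eq_zero_add hf]; ring

/-- `∫₀^∞ e^{-t} (1 − t/(e^t − 1))² dt = 5 − 4ζ(3)`, where
`ζ(3) = Σ_{k ≥ 1} 1/k³`. -/
theorem stmt10 :
    ∫ t in Set.Ioi (0 : ℝ), Real.exp (-t) * (1 - t / (Real.exp t - 1)) ^ 2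
      = 5 - 4 * ∑' k : ℕ, (1 : ℝ) / ((k : ℝ) + 1) ^ 3 := by
  have hexp : IntegrableOn (fun t : ℝ => Real.exp (-t)) (Ioi 0) := by
    have := exp_neg_integrableOn_Ioi 0 one_pos
    exact this.congr_fun (fun t _ => by norm_num) measurableSet_Ioi
  have key : EqOn (fun t : ℝ => Real.exp (-t) * (1 - t / (Real.exp t - 1)) ^ 2)
      (fun t : ℝ => (Real.exp (-t) - 2 * (t * Real.exp (-t) / (Real.exp t - 1)))
        + t^2 * Real.exp (-t) / (Real.exp t - 1)^2) (Ioi 0) := by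
    intro t ht
    have h1 : Real.exp t - 1 ≠ 0 := (exp_sub_one_pos' ht).ne'
    field_simp
    ring
  rw [setIntegral_congr_fun measurableSet_Ioi key]
  have hI1 : IntegrableOn
      (fun t : ℝ => Real.exp (-t) - 2 * (t * Real.exp (-t) / (Real.exp t - 1))) (Ioi 0) :=
    hexp.sub (g_integrable.const_mul 2)
  have hI2 : IntegrableOn
      (fun t : ℝ => 2 * (t * Real.exp (-t) / (Real.exp t - 1))) (Ioi 0) :=
    g_integrable.const_mul 2
  rw [integral_add hI1 h_integrable, integral_sub hexp hI2, integral_const_mul,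
    integral_exp_neg_Ioi_zero, g_int_eq, h_int_eq]
  -- now pure tsum arithmetic
  have hS2 : Summable (fun k : ℕ => 1/((k:ℝ)+1)^2) := by
    have := summable_shift 1 one_lt_two; simpa using this
  have hS3 : Summable (fun k : ℕ => 1/((k:ℝ)+1)^3) := by
    have := summable_shift 1 (by norm_num : 1 < 3); simpa using this
  have h22 : Summable (fun k : ℕ => 1/((k:ℝ)+2)^2) := summable_shift 2 one_lt_two
  have h32 : Summable (fun k : ℕ => 1/((k:ℝ)+3)^2) := summable_shift 3 one_lt_two
  have h23 : Summable (fun k : ℕ => 1/((k:ℝ)+2)^3) := summable_shift 2 (by norm_num)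
  have h33 : Summable (fun k : ℕ => 1/((k:ℝ)+3)^3) := summable_shift 3 (by norm_num)
  -- rewrite the h-sum as a difference
  have hdiff : ∑' k : ℕ, ((k:ℝ)+1) * (2/((k:ℝ)+3)^3)
      = 2 * (∑' k : ℕ, 1/((k:ℝ)+3)^2) - 4 * (∑' k : ℕ, 1/((k:ℝ)+3)^3) := by
    rw [← tsum_mul_left, ← tsum_mul_left, ← Summable.tsum_sub (h32.mul_left 2) (h33.mul_left 4)]
    refine tsum_congr (fun k => ?_)
    have h3 : ((k:ℝ)+3) ≠ 0 := by positivity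
    field_simp
    ring
  rw [hdiff]
  -- shift identities
  have e1 : ∑' k : ℕ, 1/((k:ℝ)+2)^2 = (∑' k : ℕ, 1/((k:ℝ)+1)^2) - 1 := by
    have h := tsum_shift1 (f := fun k : ℕ => 1/((k:ℝ)+1)^2) hS2
    push_cast at h
    norm_num at h
    have hc : ∑' k : ℕ, 1/((k:ℝ)+2)^2 = ∑' k : ℕ, (1:ℝ)/((k:ℝ)+1+1)^2 :=
      tsum_congr (fun k => by ring_nf)
    rw [hc]; simp only [one_div]; rw [h]; try norm_num
  have e2 : ∑' k : ℕ, 1/((k:ℝ)+3)^2 = (∑' k : ℕ, 1/((k:ℝ)+2)^2) - 1/4 := by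
    have h := tsum_shift1 (f := fun k : ℕ => 1/((k:ℝ)+2)^2) h22
    push_cast at h
    norm_num at h
    have hc : ∑' k : ℕ, 1/((k:ℝ)+3)^2 = ∑' k : ℕ, (1:ℝ)/((k:ℝ)+1+2)^2 :=
      tsum_congr (fun k => by ring_nf)
    rw [hc]; simp only [one_div]; rw [h]; try norm_num
  have e3 : ∑' k : ℕ, 1/((k:ℝ)+2)^3 = (∑' k : ℕ, 1/((k:ℝ)+1)^3) - 1 := by
    have h := tsum_shift1 (f := fun k : ℕ => 1/((k:ℝ)+1)^3) hS3
    push_cast at h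
    norm_num at h
    have hc : ∑' k : ℕ, 1/((k:ℝ)+2)^3 = ∑' k : ℕ, (1:ℝ)/((k:ℝ)+1+1)^3 :=
      tsum_congr (fun k => by ring_nf)
    rw [hc]; simp only [one_div]; rw [h]; try norm_num
  have e4 : ∑' k : ℕ, 1/((k:ℝ)+3)^3 = (∑' k : ℕ, 1/((k:ℝ)+2)^3) - 1/8 := by
    have h := tsum_shift1 (f := fun k : ℕ => 1/((k:ℝ)+2)^3) h23
    push_cast at h
    norm_num at h
    have hc : ∑' k : ℕ, 1/((k:ℝ)+3)^3 = ∑' k : ℕ, (1:ℝ)/((k:ℝ)+1+2)^3 :=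
      tsum_congr (fun k => by ring_nf)
    rw [hc]; simp only [one_div]; rw [h]; try norm_num
  rw [e2, e1, e4, e3]
  ring
end

section
/- Let G be a finite connected simple d-regular graph with unit resistances, d ≥ 3. Then Σ_{e∈E} R_eff(e)² ≤ 45|V|/d, where R_eff(e) is the effective resistance between the endpoints of e. -/
open Finset

/-- Dirichlet energy of a function `h` on the graph `G` with unit resistances. -/
noncomputable def energy {V : Type*} [Fintype V] [DecidableEq V]
    (G : SimpleGraph V) [DecidableRel G.Adj] (h : V → ℝ) : ℝ :=
  ∑ e ∈ G.edgeFinset,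
    Sym2.lift ⟨fun a b => (h a - h b) ^ 2, fun a b => by ring⟩ e

/-- Effective resistance between `u` and `v` in `G` (unit resistances):
its reciprocal is the infimum of the Dirichlet energy over potentials with
`h u = 1`, `h v = 0`. -/
noncomputable def Reff {V : Type*} [Fintype V] [DecidableEq V]
    (G : SimpleGraph V) [DecidableRel G.Adj] (u v : V) : ℝ :=
  (sInf {x : ℝ | ∃ h : V → ℝ, h u = 1 ∧ h v = 0 ∧ x = energy G h})⁻¹

/-- Effective resistance between the endpoints of an edge `e` (a symmetric
version of `Reff`, defined on unordered pairs). -/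
noncomputable def ReffEdge {V : Type*} [Fintype V] [DecidableEq V]
    (G : SimpleGraph V) [DecidableRel G.Adj] (e : Sym2 V) : ℝ :=
  (sInf {x : ℝ | ∃ u v : V, e = s(u, v) ∧
    ∃ h : V → ℝ, h u = 1 ∧ h v = 0 ∧ x = energy G h})⁻¹

namespace Stmt14Aux

variable {V : Type*} [Fintype V] [DecidableEq V]

noncomputable def Q (G : SimpleGraph V) [DecidableRel G.Adj] (x y : V → ℝ) : ℝ :=
  ∑ u, ∑ v, if G.Adj u v then (x u - x v) * (y u - y v) else 0

variable (G : SimpleGraph V) [DecidableRel G.Adj]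

lemma Q_symm (x y : V → ℝ) : Q G x y = Q G y x := by
  unfold Q
  refine Finset.sum_congr rfl fun u _ => Finset.sum_congr rfl fun v _ => ?_
  by_cases h : G.Adj u v <;> simp only [h, if_true, if_false] <;> ring

lemma Q_nonneg (x : V → ℝ) : 0 ≤ Q G x x := by
  refine Finset.sum_nonneg fun u _ => Finset.sum_nonneg fun v _ => ?_
  by_cases h : G.Adj u v
  · simpa [h] using mul_self_nonneg (x u - x v)
  · simp [h]

lemma Q_add_left (x x' y : V → ℝ) : Q G (x + x') y = Q G x y + Q G x' y := by
  unfold Q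
  rw [← Finset.sum_add_distrib]
  refine Finset.sum_congr rfl fun u _ => ?_
  rw [← Finset.sum_add_distrib]
  refine Finset.sum_congr rfl fun v _ => ?_
  by_cases h : G.Adj u v <;> simp only [h, if_true, if_false, Pi.add_apply] <;> ring

lemma Q_smul_left (c : ℝ) (x y : V → ℝ) : Q G (c • x) y = c * Q G x y := by
  unfold Q
  rw [Finset.mul_sum]
  refine Finset.sum_congr rfl fun u _ => ?_
  rw [Finset.mul_sum]
  refine Finset.sum_congr rfl fun v _ => ?_
  by_cases h : G.Adj u v <;> simp only [h, if_true, if_false, Pi.smul_apply, smul_eq_mul] <;> ring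

lemma Q_add_right (x y y' : V → ℝ) : Q G x (y + y') = Q G x y + Q G x y' := by
  rw [Q_symm, Q_add_left, Q_symm G y x, Q_symm G y' x]

lemma Q_smul_right (c : ℝ) (x y : V → ℝ) : Q G x (c • y) = c * Q G x y := by
  rw [Q_symm, Q_smul_left, Q_symm G y x]

lemma Q_const_left (c : ℝ) (y : V → ℝ) : Q G (fun _ => c) y = 0 := by
  unfold Q
  refine Finset.sum_eq_zero fun u _ => Finset.sum_eq_zero fun v _ => ?_
  by_cases h : G.Adj u v <;> simp [h]

/-- Conversion between sums over ordered adjacent pairs and sums over edges. -/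
lemma sum_pairs (f : V → V → ℝ) (hf : ∀ u v, f u v = f v u) :
    ∑ u, ∑ v, (if G.Adj u v then f u v else 0)
      = ∑ e ∈ G.edgeFinset, 2 * Sym2.lift ⟨f, hf⟩ e := by
  classical
  rw [← Finset.sum_product' (f := fun u v => if G.Adj u v then f u v else 0), ← Finset.sum_filter]
  rw [← Finset.sum_fiberwise_of_maps_to (g := fun p : V × V => s(p.1, p.2)) (t := G.edgeFinset)
      (fun p hp => by
        simp only [Finset.mem_filter] at hp
        exact SimpleGraph.mem_edgeFinset.mpr hp.2)]
  refine Finset.sum_congr rfl fun e he => ?_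
  induction e using Sym2.inductionOn with
  | hf a b =>
    have hab : G.Adj a b := SimpleGraph.mem_edgeFinset.mp he
    have hne : a ≠ b := G.ne_of_adj hab
    have hfib : ((Finset.univ ×ˢ Finset.univ).filter fun p : V × V => G.Adj p.1 p.2).filter
        (fun p : V × V => s(p.1, p.2) = s(a, b)) = {(a, b), (b, a)} := by
      ext ⟨x, y⟩
      simp only [Finset.mem_filter, Finset.mem_product, Finset.mem_univ, true_and,
        Finset.mem_insert, Finset.mem_singleton, Prod.mk.injEq]
      constructor
      · rintro ⟨-, hxy⟩
        rcases Sym2.eq_iff.mp hxy with ⟨rfl, rfl⟩ | ⟨rfl, rfl⟩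
        · exact Or.inl ⟨rfl, rfl⟩
        · exact Or.inr ⟨rfl, rfl⟩
      · rintro (⟨rfl, rfl⟩ | ⟨rfl, rfl⟩)
        · exact ⟨hab, rfl⟩
        · exact ⟨hab.symm, Sym2.eq_swap⟩
    rw [hfib]
    rw [Finset.sum_pair (by simpa using fun h : a = b => (hne h).elim)]
    rw [Sym2.lift_mk]
    simp only []
    rw [hf b a]
    ring

lemma energy_eq (h : V → ℝ) : energy G h = Q G h h / 2 := by
  have hsym : ∀ u v : V, (h u - h v) * (h u - h v) = (h v - h u) * (h v - h u) := by
    intro u v; ring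
  have h1 : Q G h h
      = ∑ e ∈ G.edgeFinset, 2 * Sym2.lift ⟨fun u v => (h u - h v) * (h u - h v), hsym⟩ e :=
    sum_pairs G _ hsym
  have h2 : ∀ e ∈ G.edgeFinset,
      2 * Sym2.lift ⟨fun u v => (h u - h v) * (h u - h v), hsym⟩ e
        = 2 * Sym2.lift ⟨fun a b => (h a - h b) ^ 2, fun a b => by ring⟩ e := by
    intro e _
    induction e using Sym2.inductionOn with
    | hf a b => rw [Sym2.lift_mk, Sym2.lift_mk]; ring
  rw [Finset.sum_congr rfl h2, ← Finset.mul_sum] at h1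
  unfold energy
  rw [h1]
  ring


/-- The positive definite bilinear form `Q x y + (∑ x)(∑ y)`. -/
noncomputable def Bf : LinearMap.BilinForm ℝ (V → ℝ) :=
  LinearMap.mk₂ ℝ (fun x y => Q G x y + (∑ u, x u) * (∑ u, y u))
    (fun x x' y => by
      show Q G (x + x') y + (∑ u, (x + x') u) * (∑ u, y u)
        = (Q G x y + (∑ u, x u) * (∑ u, y u)) + (Q G x' y + (∑ u, x' u) * (∑ u, y u))
      rw [Q_add_left]
      have : ∑ u, (x + x') u = (∑ u, x u) + ∑ u, x' u := by
        simp [Finset.sum_add_distrib]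
      rw [this]; ring)
    (fun c x y => by
      show Q G (c • x) y + (∑ u, (c • x) u) * (∑ u, y u)
        = c • (Q G x y + (∑ u, x u) * (∑ u, y u))
      rw [Q_smul_left]
      have : ∑ u, (c • x) u = c * ∑ u, x u := by
        simp [Finset.mul_sum]
      rw [this, smul_eq_mul]; ring)
    (fun x y y' => by
      show Q G x (y + y') + (∑ u, x u) * (∑ u, (y + y') u)
        = (Q G x y + (∑ u, x u) * (∑ u, y u)) + (Q G x y' + (∑ u, x u) * (∑ u, y' u))
      rw [Q_add_right]
      have : ∑ u, (y + y') u = (∑ u, y u) + ∑ u, y' u := by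
        simp [Finset.sum_add_distrib]
      rw [this]; ring)
    (fun c x y => by
      show Q G x (c • y) + (∑ u, x u) * (∑ u, (c • y) u)
        = c • (Q G x y + (∑ u, x u) * (∑ u, y u))
      rw [Q_smul_right]
      have : ∑ u, (c • y) u = c * ∑ u, y u := by
        simp [Finset.mul_sum]
      rw [this, smul_eq_mul]; ring)

lemma Bf_apply (x y : V → ℝ) :
    Bf G x y = Q G x y + (∑ u, x u) * (∑ u, y u) := rfl

/-- If the local differences vanish along edges, a function is constant on a connected graph. -/
lemma const_of_adj (hG : G.Connected) {z : V → ℝ}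
    (hz : ∀ u v, G.Adj u v → z u = z v) (u v : V) : z u = z v := by
  obtain ⟨w⟩ := hG.preconnected u v
  induction w with
  | nil => rfl
  | cons hadj _ ih => exact (hz _ _ hadj).trans ih

lemma Bf_sepLeft (hG : G.Connected) : (Bf G).SeparatingLeft := by
  intro z hz
  have h0 : Q G z z + (∑ u, z u) * (∑ u, z u) = 0 := hz z
  have hQ : Q G z z = 0 ∧ (∑ u, z u) = 0 := by
    have h1 := Q_nonneg G z
    have h2 := mul_self_nonneg (∑ u, z u)
    constructor
    · linarith
    · nlinarith
  have hadj : ∀ u v, G.Adj u v → z u = z v := by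
    intro u v huv
    have := (Finset.sum_eq_zero_iff_of_nonneg
      (fun u _ => Finset.sum_nonneg fun v _ => ?_)).mp hQ.1 u (Finset.mem_univ u)
    · have := (Finset.sum_eq_zero_iff_of_nonneg (fun v _ => ?_)).mp this v (Finset.mem_univ v)
      · rw [if_pos huv] at this
        have := mul_self_eq_zero.mp this
        linarith [sub_eq_zero.mp this]
      · by_cases huv' : G.Adj u v
        · simpa [huv'] using mul_self_nonneg (z u - z v)
        · simp [huv']
    · by_cases huv' : G.Adj u v
      · simpa [huv'] using mul_self_nonneg (z u - z v)
      · simp [huv']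
  have hconst : ∀ a b : V, z a = z b := const_of_adj G hG hadj
  have hcard : 0 < Fintype.card V := Fintype.card_pos_iff.mpr hG.nonempty
  funext a
  have : ∑ u, z u = (Fintype.card V : ℝ) * z a := by
    rw [Finset.sum_congr rfl fun b _ => hconst b a]
    simp [Finset.sum_const, mul_comm]
  rw [hQ.2] at this
  have hne : (Fintype.card V : ℝ) ≠ 0 := Nat.cast_ne_zero.mpr hcard.ne'
  exact (mul_eq_zero.mp this.symm).resolve_left hne

lemma Bf_nondeg (hG : G.Connected) : (Bf G).Nondegenerate :=
  ⟨Bf_sepLeft G hG, fun z hz => Bf_sepLeft G hG z fun y => by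
    have := hz y
    rw [Bf_apply] at this ⊢
    rw [Q_symm, mul_comm]
    exact this⟩

variable (hG : G.Connected)

/-- The Riesz representative of the functional `h ↦ h u - h v` for the form `Bf`. -/
noncomputable def yv (u v : V) : V → ℝ :=
  ((Bf G).toDual (Bf_nondeg G hG)).symm
    (LinearMap.proj (R := ℝ) (φ := fun _ : V => ℝ) u - LinearMap.proj (R := ℝ) (φ := fun _ : V => ℝ) v)

lemma Bf_yv (u v : V) (h : V → ℝ) : Bf G (yv G hG u v) h = h u - h v := by
  unfold yv
  rw [LinearMap.BilinForm.apply_toDual_symm_apply]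
  simp

lemma sum_yv (u v : V) : ∑ w, yv G hG u v w = 0 := by
  have h1 := Bf_yv G hG u v (fun _ => (1 : ℝ))
  rw [Bf_apply, Q_symm, Q_const_left] at h1
  have hcard : 0 < Fintype.card V := Fintype.card_pos_iff.mpr hG.nonempty
  have hne : (Fintype.card V : ℝ) ≠ 0 := Nat.cast_ne_zero.mpr hcard.ne'
  simp only [Finset.sum_const, Finset.card_univ, nsmul_eq_mul, mul_one, sub_self] at h1
  rw [zero_add] at h1
  exact (mul_eq_zero.mp h1).resolve_right hne

lemma Q_yv (u v : V) (h : V → ℝ) : Q G (yv G hG u v) h = h u - h v := by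
  have := Bf_yv G hG u v h
  rw [Bf_apply, sum_yv G hG u v] at this
  simpa using this


/-- Half the effective resistance between `u` and `v`. -/
noncomputable def rv (u v : V) : ℝ := yv G hG u v u - yv G hG u v v

lemma rv_eq_Q (u v : V) : rv G hG u v = Q G (yv G hG u v) (yv G hG u v) :=
  (Q_yv G hG u v _).symm

lemma rv_nonneg (u v : V) : 0 ≤ rv G hG u v := by
  rw [rv_eq_Q]; exact Q_nonneg G _

lemma yv_neg (u v : V) : yv G hG v u = -yv G hG u v := by
  unfold yv
  rw [show (LinearMap.proj (R := ℝ) (φ := fun _ : V => ℝ) v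
        - LinearMap.proj (R := ℝ) (φ := fun _ : V => ℝ) u)
      = -(LinearMap.proj (R := ℝ) (φ := fun _ : V => ℝ) u
        - LinearMap.proj (R := ℝ) (φ := fun _ : V => ℝ) v) from (neg_sub _ _).symm,
    map_neg]

lemma rv_symm (u v : V) : rv G hG v u = rv G hG u v := by
  unfold rv
  rw [yv_neg]
  simp only [Pi.neg_apply]
  ring

/-- Cauchy–Schwarz for the Dirichlet form. -/
lemma CS (u v : V) (h : V → ℝ) :
    (h u - h v) ^ 2 ≤ Q G h h * rv G hG u v := by
  set y := yv G hG u v with hy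
  have expand : ∀ t : ℝ,
      0 ≤ (rv G hG u v) * (t * t) + (2 * (h u - h v)) * t + Q G h h := by
    intro t
    have h0 := Q_nonneg G (h + t • y)
    have e1 : Q G (h + t • y) (h + t • y)
        = Q G h h + t * Q G h y + (t * Q G y h + t * (t * Q G y y)) := by
      simp only [Q_add_left, Q_add_right, Q_smul_left, Q_smul_right]
      ring
    have e2 : Q G y h = h u - h v := Q_yv G hG u v h
    have e3 : Q G h y = h u - h v := by rw [Q_symm]; exact e2
    have e4 : Q G y y = rv G hG u v := (rv_eq_Q G hG u v).symm
    rw [e1, e2, e3, e4] at h0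
    nlinarith [h0]
  have hd := discrim_le_zero expand
  rw [discrim] at hd
  nlinarith [hd]

/-- The representation identity underlying Foster's theorem. -/
lemma rep_sum (g : V → ℝ) :
    (∑ u, ∑ v, if G.Adj u v then (g u - g v) • yv G hG u v else (0 : V → ℝ))
      = g - (((∑ w, g w) / (Fintype.card V : ℝ)) • (fun _ => (1 : ℝ))) := by
  have hcard : 0 < Fintype.card V := Fintype.card_pos_iff.mpr hG.nonempty
  have hne : (Fintype.card V : ℝ) ≠ 0 := Nat.cast_ne_zero.mpr hcard.ne'
  set c := (∑ w, g w) / (Fintype.card V : ℝ) with hc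
  have key : ∀ h : V → ℝ,
      Bf G ((∑ u, ∑ v, if G.Adj u v then (g u - g v) • yv G hG u v else (0 : V → ℝ))
        - (g - c • (fun _ => (1 : ℝ)))) h = 0 := by
    intro h
    rw [map_sub, LinearMap.sub_apply]
    have l1 : Bf G (∑ u, ∑ v, if G.Adj u v then (g u - g v) • yv G hG u v else (0 : V → ℝ)) h
        = ∑ u, ∑ v, (if G.Adj u v then (g u - g v) * (h u - h v) else 0) := by
      rw [map_sum, LinearMap.sum_apply]
      refine Finset.sum_congr rfl fun u _ => ?_
      rw [map_sum, LinearMap.sum_apply]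
      refine Finset.sum_congr rfl fun v _ => ?_
      by_cases hadj : G.Adj u v
      · rw [if_pos hadj, if_pos hadj, map_smul, LinearMap.smul_apply, smul_eq_mul, Bf_yv]
      · rw [if_neg hadj, if_neg hadj, map_zero, LinearMap.zero_apply]
    have l2 : Bf G (g - c • (fun _ => (1 : ℝ))) h
        = ∑ u, ∑ v, (if G.Adj u v then (g u - g v) * (h u - h v) else 0) := by
      rw [map_sub, LinearMap.sub_apply, map_smul, LinearMap.smul_apply, Bf_apply, Bf_apply,
        Q_const_left]
      have e5 : ∑ _u : V, (1 : ℝ) = (Fintype.card V : ℝ) := by simp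
      rw [e5]
      have e7 : Q G g h = ∑ u, ∑ v, (if G.Adj u v then (g u - g v) * (h u - h v) else 0) := rfl
      have e8 : c * (0 + (Fintype.card V : ℝ) * (∑ u, h u)) = (∑ u, g u) * (∑ u, h u) := by
        rw [hc]
        field_simp
        ring
      rw [smul_eq_mul, e8, ← e7]
      ring
    rw [l1, l2, sub_self]
  exact sub_eq_zero.mp ((Bf_nondeg G hG).1 _ key)

/-- Foster's theorem: the resistances over ordered adjacent pairs sum to `2(n-1)`
(here `rv` is half the resistance). -/
lemma foster :
    (∑ u, ∑ v, if G.Adj u v then rv G hG u v else 0) = (Fintype.card V : ℝ) - 1 := by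
  have hcard : 0 < Fintype.card V := Fintype.card_pos_iff.mpr hG.nonempty
  have hne : (Fintype.card V : ℝ) ≠ 0 := Nat.cast_ne_zero.mpr hcard.ne'
  have key := fun w : V => congrFun (rep_sum G hG (fun x => if x = w then (1 : ℝ) else 0)) w
  have lhs_eq : ∀ w : V,
      (∑ u, ∑ v, if G.Adj u v
          then (((if u = w then (1:ℝ) else 0) - (if v = w then (1:ℝ) else 0)) • yv G hG u v)
          else (0 : V → ℝ)) w
        = ∑ u, ∑ v, (if G.Adj u v
            then ((if u = w then (1:ℝ) else 0) - (if v = w then (1:ℝ) else 0)) * yv G hG u v w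
            else 0) := by
    intro w
    rw [Finset.sum_apply]
    refine Finset.sum_congr rfl fun u _ => ?_
    rw [Finset.sum_apply]
    refine Finset.sum_congr rfl fun v _ => ?_
    by_cases hadj : G.Adj u v <;> simp [hadj]
  have total : (∑ w, ∑ u, ∑ v, (if G.Adj u v
      then ((if u = w then (1:ℝ) else 0) - (if v = w then (1:ℝ) else 0)) * yv G hG u v w
      else 0)) = (Fintype.card V : ℝ) - 1 := by
    have : ∀ w : V, (∑ u, ∑ v, (if G.Adj u v
        then ((if u = w then (1:ℝ) else 0) - (if v = w then (1:ℝ) else 0)) * yv G hG u v w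
        else 0)) = 1 - ((Fintype.card V : ℝ))⁻¹ := by
      intro w
      rw [← lhs_eq w, key w]
      have hsum : (∑ x : V, if x = w then (1:ℝ) else 0) = 1 := by
        rw [Finset.sum_ite_eq' Finset.univ w (fun _ => (1:ℝ))]
        simp
      simp [hsum]
    rw [Finset.sum_congr rfl fun w _ => this w]
    rw [Finset.sum_const, Finset.card_univ, nsmul_eq_mul]
    field_simp
  rw [Finset.sum_comm] at total
  have swap2 : ∀ u : V, (∑ w : V, ∑ v : V, (if G.Adj u v
      then ((if u = w then (1:ℝ) else 0) - (if v = w then (1:ℝ) else 0)) * yv G hG u v w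
      else 0)) = ∑ v : V, ∑ w : V, (if G.Adj u v
      then ((if u = w then (1:ℝ) else 0) - (if v = w then (1:ℝ) else 0)) * yv G hG u v w
      else 0) := fun u => Finset.sum_comm
  rw [Finset.sum_congr rfl fun u _ => swap2 u] at total
  have inner_eq : ∀ u v : V, (∑ w : V, (if G.Adj u v
      then ((if u = w then (1:ℝ) else 0) - (if v = w then (1:ℝ) else 0)) * yv G hG u v w
      else 0)) = (if G.Adj u v then rv G hG u v else 0) := by
    intro u v
    by_cases hadj : G.Adj u v
    · simp only [hadj, if_true]
      have hne' : u ≠ v := G.ne_of_adj hadj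
      have : ∀ w : V, ((if u = w then (1:ℝ) else 0) - (if v = w then (1:ℝ) else 0))
          * yv G hG u v w
          = (if u = w then yv G hG u v w else 0) - (if v = w then yv G hG u v w else 0) := by
        intro w
        by_cases h1 : u = w <;> by_cases h2 : v = w <;> simp [h1, h2] <;> ring
      rw [Finset.sum_congr rfl fun w _ => this w, Finset.sum_sub_distrib,
        Finset.sum_ite_eq Finset.univ u (fun w => yv G hG u v w),
        Finset.sum_ite_eq Finset.univ v (fun w => yv G hG u v w)]
      simp [rv]
    · simp [hadj]
  rw [Finset.sum_congr rfl fun u _ => Finset.sum_congr rfl fun v _ => inner_eq u v] at total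
  exact total


/-- Using the test potential `(1, 0, 1/2, ..., 1/2)`:
the resistance of an edge in a `d`-regular graph is at least `2/(d+1)`. -/
lemma rv_lower {d : ℕ} (hreg : G.IsRegularOfDegree d) {u v : V} (huv : G.Adj u v) :
    1 ≤ ((d : ℝ) + 1) * rv G hG u v := by
  classical
  set h0 : V → ℝ := fun x => if x = u then 1 else if x = v then 0 else 1/2 with hh0
  have hne : u ≠ v := G.ne_of_adj huv
  have h0u : h0 u = 1 := by simp [hh0]
  have h0v : h0 v = 0 := by simp [hh0, hne.symm]
  have hd1 : 1 ≤ d := by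
    have h1 : 0 < G.degree u := by
      rw [SimpleGraph.degree_pos_iff_exists_adj]
      exact ⟨v, huv⟩
    rw [hreg u] at h1
    omega
  have dcast : ((d - 1 : ℕ) : ℝ) = (d : ℝ) - 1 := by
    rw [Nat.cast_sub hd1]; norm_num
  have row_u : (∑ b, if G.Adj u b then (h0 u - h0 b) * (h0 u - h0 b) else 0)
      = 1 + ((d:ℝ) - 1) / 4 := by
    rw [← Finset.sum_filter, ← SimpleGraph.neighborFinset_eq_filter]
    rw [← Finset.add_sum_erase _ _ ((G.mem_neighborFinset u v).mpr huv)]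
    have hterm : (h0 u - h0 v) * (h0 u - h0 v) = 1 := by rw [h0u, h0v]; ring
    rw [hterm]
    congr 1
    have hrw : ∀ b ∈ (G.neighborFinset u).erase v,
        (h0 u - h0 b) * (h0 u - h0 b) = 1/4 := by
      intro b hb
      obtain ⟨hbv, hbn⟩ := Finset.mem_erase.mp hb
      have hbu : b ≠ u := ((G.mem_neighborFinset u b).mp hbn).ne'
      have : h0 b = 1/2 := by simp [hh0, hbu, hbv]
      rw [h0u, this]; ring
    rw [Finset.sum_congr rfl hrw, Finset.sum_const,
      Finset.card_erase_of_mem ((G.mem_neighborFinset u v).mpr huv),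
      SimpleGraph.card_neighborFinset_eq_degree, hreg u, nsmul_eq_mul, dcast]
    ring
  have row_v : (∑ b, if G.Adj v b then (h0 v - h0 b) * (h0 v - h0 b) else 0)
      = 1 + ((d:ℝ) - 1) / 4 := by
    rw [← Finset.sum_filter, ← SimpleGraph.neighborFinset_eq_filter]
    rw [← Finset.add_sum_erase _ _ ((G.mem_neighborFinset v u).mpr huv.symm)]
    have hterm : (h0 v - h0 u) * (h0 v - h0 u) = 1 := by rw [h0u, h0v]; ring
    rw [hterm]
    congr 1
    have hrw : ∀ b ∈ (G.neighborFinset v).erase u,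
        (h0 v - h0 b) * (h0 v - h0 b) = 1/4 := by
      intro b hb
      obtain ⟨hbu, hbn⟩ := Finset.mem_erase.mp hb
      have hbv : b ≠ v := ((G.mem_neighborFinset v b).mp hbn).ne'
      have : h0 b = 1/2 := by simp [hh0, hbu, hbv]
      rw [h0v, this]; ring
    rw [Finset.sum_congr rfl hrw, Finset.sum_const,
      Finset.card_erase_of_mem ((G.mem_neighborFinset v u).mpr huv.symm),
      SimpleGraph.card_neighborFinset_eq_degree, hreg v, nsmul_eq_mul, dcast]
    ring
  have hsplit : ∀ a : V, a ≠ u → a ≠ v → ∀ b : V,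
      (if G.Adj a b then (h0 a - h0 b) * (h0 a - h0 b) else 0)
      = (if b = u then (if G.Adj a u then (1:ℝ)/4 else 0) else 0)
        + (if b = v then (if G.Adj a v then (1:ℝ)/4 else 0) else 0) := by
    intro a hau hav b
    have h0a : h0 a = 1/2 := by simp [hh0, hau, hav]
    by_cases hbu : b = u
    · subst hbu
      by_cases hadj : G.Adj a b
      · simp [hadj, hne, h0a, h0u]; ring
      · simp [hadj, hne]
    · by_cases hbv : b = v
      · subst hbv
        by_cases hadj : G.Adj a b
        · simp [hadj, hbu, h0a, h0v]; ring
        · simp [hadj, hbu]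
      · have h0b : h0 b = 1/2 := by simp [hh0, hbu, hbv]
        by_cases hadj : G.Adj a b
        · simp [hadj, hbu, hbv, h0a, h0b]
        · simp [hadj, hbu, hbv]
  have hcardu : (((Finset.univ.erase u).erase v).filter fun a => G.Adj a u)
      = (G.neighborFinset u).erase v := by
    ext a
    simp only [Finset.mem_filter, Finset.mem_erase, Finset.mem_univ, and_true,
      SimpleGraph.mem_neighborFinset]
    constructor
    · rintro ⟨⟨hav, hau⟩, hadj⟩
      exact ⟨hav, hadj.symm⟩
    · rintro ⟨hav, hadj⟩
      exact ⟨⟨hav, hadj.ne'⟩, hadj.symm⟩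
  have hcardv : (((Finset.univ.erase u).erase v).filter fun a => G.Adj a v)
      = (G.neighborFinset v).erase u := by
    ext a
    simp only [Finset.mem_filter, Finset.mem_erase, Finset.mem_univ, and_true,
      SimpleGraph.mem_neighborFinset]
    constructor
    · rintro ⟨⟨hav, hau⟩, hadj⟩
      exact ⟨hau, hadj.symm⟩
    · rintro ⟨hau, hadj⟩
      exact ⟨⟨hadj.ne', hau⟩, hadj.symm⟩
  have hrest : (∑ a ∈ (Finset.univ.erase u).erase v,
      ∑ b, if G.Adj a b then (h0 a - h0 b) * (h0 a - h0 b) else 0)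
      = ((d:ℝ) - 1)/4 + ((d:ℝ) - 1)/4 := by
    have hrow : ∀ a ∈ (Finset.univ.erase u).erase v,
        (∑ b, if G.Adj a b then (h0 a - h0 b) * (h0 a - h0 b) else 0)
        = (if G.Adj a u then (1:ℝ)/4 else 0) + (if G.Adj a v then (1:ℝ)/4 else 0) := by
      intro a ha
      obtain ⟨hav, hau⟩ := Finset.mem_erase.mp ha
      have hau' : a ≠ u := (Finset.mem_erase.mp hau).1
      rw [Finset.sum_congr rfl fun b _ => hsplit a hau' hav b, Finset.sum_add_distrib,
        Finset.sum_ite_eq' Finset.univ u (fun _ => if G.Adj a u then (1:ℝ)/4 else 0),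
        Finset.sum_ite_eq' Finset.univ v (fun _ => if G.Adj a v then (1:ℝ)/4 else 0)]
      simp
    rw [Finset.sum_congr rfl hrow, Finset.sum_add_distrib]
    rw [← Finset.sum_filter, ← Finset.sum_filter, hcardu, hcardv,
      Finset.sum_const, Finset.sum_const,
      Finset.card_erase_of_mem ((G.mem_neighborFinset u v).mpr huv),
      Finset.card_erase_of_mem ((G.mem_neighborFinset v u).mpr huv.symm),
      SimpleGraph.card_neighborFinset_eq_degree, SimpleGraph.card_neighborFinset_eq_degree,
      hreg u, hreg v]
    simp only [nsmul_eq_mul, dcast]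
    ring
  have hQ : Q G h0 h0 = (d:ℝ) + 1 := by
    unfold Q
    rw [← Finset.add_sum_erase _ _ (Finset.mem_univ u)]
    have hvmem : v ∈ Finset.univ.erase u :=
      Finset.mem_erase.mpr ⟨hne.symm, Finset.mem_univ v⟩
    rw [← Finset.add_sum_erase _ _ hvmem, row_u, row_v, hrest]
    ring
  have hcs := CS G hG u v h0
  rw [h0u, h0v, hQ] at hcs
  norm_num at hcs
  linarith


/-- The key pointwise estimate on one edge. -/
lemma edge_pointwise {d : ℕ} (hreg : G.IsRegularOfDegree d) (hd : 3 ≤ d)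
    {u v : V} (huv : G.Adj u v) :
    ReffEdge G s(u, v) ^ 2 ≤ 3 / (d : ℝ) * (2 * rv G hG u v)
      + (2 * rv G hG u v - 2 / ((d : ℝ) + 1)) := by
  classical
  set S := {x : ℝ | ∃ a b : V, s(u, v) = s(a, b) ∧
    ∃ h : V → ℝ, h a = 1 ∧ h b = 0 ∧ x = energy G h} with hSdef
  have hRdef : ReffEdge G s(u, v) = (sInf S)⁻¹ := rfl
  have hne : u ≠ v := G.ne_of_adj huv
  have hdR : (3:ℝ) ≤ (d : ℝ) := by exact_mod_cast hd
  have hdpos : (0:ℝ) < (d : ℝ) := by linarith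
  have hSne : S.Nonempty := by
    refine ⟨energy G (fun x => if x = u then 1 else 0), u, v, rfl,
      (fun x => if x = u then 1 else 0), by simp, by simp [hne.symm], rfl⟩
  have hrv1 : 1 ≤ ((d : ℝ) + 1) * rv G hG u v := rv_lower G hG hreg huv
  have hrvpos : 0 < rv G hG u v := by nlinarith [rv_nonneg G hG u v]
  have hS1 : ∀ x ∈ S, (1:ℝ) ≤ x := by
    rintro x ⟨a, b, hab, h, ha1, hb0, rfl⟩
    have hmem : s(a, b) ∈ G.edgeFinset := by
      rw [← hab]; exact SimpleGraph.mem_edgeFinset.mpr huv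
    have hnonneg : ∀ e ∈ G.edgeFinset,
        0 ≤ Sym2.lift ⟨fun a b => (h a - h b) ^ 2, fun a b => by ring⟩ e := by
      intro e _
      induction e using Sym2.inductionOn with
      | hf a b => rw [Sym2.lift_mk]; positivity
    have hterm := Finset.single_le_sum hnonneg hmem
    rw [Sym2.lift_mk] at hterm
    have hterm' : (h a - h b) ^ 2 ≤ ∑ x ∈ G.edgeFinset,
        Sym2.lift ⟨fun a b => (h a - h b) ^ 2, fun a b => by ring⟩ x := hterm
    rw [ha1, hb0] at hterm'
    unfold energy
    norm_num at hterm'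
    exact hterm'
  have hS2 : ∀ x ∈ S, 1 / (2 * rv G hG u v) ≤ x := by
    rintro x ⟨a, b, hab, h, ha1, hb0, rfl⟩
    have hrvab : rv G hG a b = rv G hG u v := by
      rcases Sym2.eq_iff.mp hab with ⟨h1, h2⟩ | ⟨h1, h2⟩
      · rw [← h1, ← h2]
      · rw [← h1, ← h2]
        exact rv_symm G hG u v
    have hcs := CS G hG a b h
    rw [ha1, hb0, hrvab] at hcs
    norm_num at hcs
    have heq : energy G h = Q G h h / 2 := energy_eq G h
    rw [div_le_iff₀ (by positivity)]
    nlinarith [hcs]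
  have hinf1 : 1 ≤ sInf S := le_csInf hSne hS1
  have hinf2 : 1 / (2 * rv G hG u v) ≤ sInf S := le_csInf hSne hS2
  have hinfpos : (0:ℝ) < sInf S := by linarith
  have hR1 : ReffEdge G s(u, v) ≤ 1 := by
    rw [hRdef]
    exact inv_le_one_of_one_le₀ hinf1
  have hR0 : 0 < ReffEdge G s(u, v) := by
    rw [hRdef]; exact inv_pos.mpr hinfpos
  have hRr : ReffEdge G s(u, v) ≤ 2 * rv G hG u v := by
    rw [hRdef]
    have h2' : (2 * rv G hG u v)⁻¹ ≤ sInf S := by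
      rw [← one_div]; exact hinf2
    calc (sInf S)⁻¹ ≤ ((2 * rv G hG u v)⁻¹)⁻¹ :=
          inv_anti₀ (by positivity) h2'
      _ = 2 * rv G hG u v := inv_inv _
  set R := ReffEdge G s(u, v)
  set sE := 2 * rv G hG u v with hsE
  have hslow : 2 / ((d:ℝ) + 1) ≤ sE := by
    rw [div_le_iff₀ (by positivity)]
    nlinarith [hrv1]
  by_cases hcase : R ≤ 3 / (d : ℝ)
  · have h1 : R ^ 2 ≤ 3 / (d:ℝ) * R := by nlinarith [hR0.le]
    have h2 : 3 / (d:ℝ) * R ≤ 3 / (d:ℝ) * sE :=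
      mul_le_mul_of_nonneg_left hRr (by positivity)
    linarith
  · push_neg at hcase
    have key : R ^ 2 ≤ 3 / (d:ℝ) * R + (R - 3 / (d:ℝ)) := by nlinarith [hR1, hcase.le]
    have h23 : 2 / ((d:ℝ) + 1) ≤ 3 / (d:ℝ) := by
      rw [div_le_div_iff₀ (by positivity) (by positivity)]
      nlinarith
    have h2 : 3 / (d:ℝ) * R ≤ 3 / (d:ℝ) * sE :=
      mul_le_mul_of_nonneg_left hRr (by positivity)
    linarith

end Stmt14Aux

/-- For a finite connected simple `d`-regular graph with `d ≥ 3`, the sum over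
edges of the squared effective resistance is at most `45|V|/d`. -/
theorem stmt14 {V : Type*} [Fintype V] [DecidableEq V]
    (G : SimpleGraph V) [DecidableRel G.Adj] (hG : G.Connected)
    (d : ℕ) (hd : 3 ≤ d) (hreg : G.IsRegularOfDegree d) :
    ∑ e ∈ G.edgeFinset, ReffEdge G e ^ 2
      ≤ 45 * (Fintype.card V : ℝ) / (d : ℝ) := by
  classical
  set N := (Fintype.card V : ℝ) with hN
  set D := (d : ℝ) with hD
  have hd3 : (3:ℝ) ≤ D := by rw [hD]; exact_mod_cast hd
  have hDpos : (0:ℝ) < D := by linarith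
  have hn1 : (1:ℝ) ≤ N := by
    rw [hN]
    exact_mod_cast Fintype.card_pos_iff.mpr hG.nonempty
  set F : Sym2 V → ℝ := Sym2.lift
    ⟨fun a b => Stmt14Aux.rv G hG a b, fun a b => Stmt14Aux.rv_symm G hG b a⟩ with hF
  have hsum : ∑ e ∈ G.edgeFinset, 2 * F e = N - 1 := by
    calc ∑ e ∈ G.edgeFinset, 2 * F e
        = ∑ u, ∑ v, if G.Adj u v then Stmt14Aux.rv G hG u v else 0 :=
          (Stmt14Aux.sum_pairs G _ _).symm
      _ = N - 1 := Stmt14Aux.foster G hG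
  have hpoint : ∀ e ∈ G.edgeFinset, ReffEdge G e ^ 2
      ≤ 3 / D * (2 * F e) + (2 * F e - 2 / (D + 1)) := by
    intro e he
    induction e using Sym2.inductionOn with
    | hf a b =>
      have hadj : G.Adj a b := SimpleGraph.mem_edgeFinset.mp he
      have hL : F s(a, b) = Stmt14Aux.rv G hG a b := Sym2.lift_mk _ _ _
      rw [hL]
      exact Stmt14Aux.edge_pointwise G hG hreg hd hadj
  have hsumle := Finset.sum_le_sum hpoint
  have hEcard : 2 * (G.edgeFinset.card : ℝ) = N * D := by
    have h1 := SimpleGraph.sum_degrees_eq_twice_card_edges G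
    rw [Finset.sum_congr rfl fun v _ => hreg v, Finset.sum_const, Finset.card_univ,
      smul_eq_mul] at h1
    rw [hN, hD]
    exact_mod_cast h1.symm
  have hrhs : ∑ e ∈ G.edgeFinset, (3 / D * (2 * F e) + (2 * F e - 2 / (D + 1)))
      = 3 / D * (N - 1) + ((N - 1) - (G.edgeFinset.card : ℝ) * (2 / (D + 1))) := by
    rw [Finset.sum_add_distrib, Finset.sum_sub_distrib, ← Finset.mul_sum, hsum,
      Finset.sum_const, nsmul_eq_mul]
  have harith : 3 / D * (N - 1) + ((N - 1) - (G.edgeFinset.card : ℝ) * (2 / (D + 1)))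
      ≤ 45 * N / D := by
    have hE2 : (G.edgeFinset.card : ℝ) = N * D / 2 := by linarith
    rw [hE2]
    rw [← mul_le_mul_iff_of_pos_right (show (0:ℝ) < D * (D + 1) by positivity)]
    have key : (3 / D * (N - 1) + ((N - 1) - N * D / 2 * (2 / (D + 1)))) * (D * (D + 1))
        = 3 * (N - 1) * (D + 1) + ((N - 1) * (D + 1) - N * D) * D := by
      field_simp
      try ring
    have key2 : 45 * N / D * (D * (D + 1)) = 45 * N * (D + 1) := by
      field_simp
      try ring
    rw [key, key2]
    nlinarith [mul_nonneg (by linarith : (0:ℝ) ≤ N) (by linarith : (0:ℝ) ≤ D)]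
  calc ∑ e ∈ G.edgeFinset, ReffEdge G e ^ 2
      ≤ ∑ e ∈ G.edgeFinset, (3 / D * (2 * F e) + (2 * F e - 2 / (D + 1))) := hsumle
    _ = 3 / D * (N - 1) + ((N - 1) - (G.edgeFinset.card : ℝ) * (2 / (D + 1))) := hrhs
    _ ≤ 45 * N / D := harith
end
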